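/- arXiv:2001.01791 — 7 statements merged into one kernel-verified Lean document; each statement's English description precedes it below -/
import Mathlib

section
/- More generally, for all nonnegative integers n and t, the sum of the products j_0 · j_1 · ... · j_t over all compositions (j_0, j_1, ..., j_t) of n into t+1 positive integer parts equals the binomial coefficient C(n + t, 2t + 1). -/
open Finset

/-- Hockey stick. -/
lemma hockey (t : ℕ) : ∀ n : ℕ, ∑ b ∈ range (n + 1), (b + t).choose (2 * t + 1)
    = (n + t + 1).choose (2 * t + 2) := by
  intro n
  induction n with
  | zero =>
    simp only [range_one, sum_singleton, Nat.zero_add]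
    rw [Nat.choose_eq_zero_of_lt (by omega), Nat.choose_eq_zero_of_lt (by omega)]
  | succ n ih =>
    rw [Finset.sum_range_succ, ih]
    have e1 : n + 1 + t + 1 = n + t + 2 := by ring
    have e2 : n + 1 + t = n + t + 1 := by ring
    rw [e1, e2]
    have h : (n + t + 2).choose (2 * t + 2)
        = (n + t + 1).choose (2 * t + 1) + (n + t + 1).choose (2 * t + 2) :=
      Nat.choose_succ_succ' (n + t + 1) (2 * t + 1)
    omega

lemma vandG (t : ℕ) : ∀ n : ℕ, ∑ k ∈ range (n + 1), (n - k) * (k + t).choose (2 * t + 1)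
    = (n + t + 1).choose (2 * t + 3) := by
  intro n
  induction n with
  | zero =>
    simp [Nat.choose_eq_zero_of_lt (show t + 1 < 2 * t + 3 by omega)]
  | succ n ih =>
    rw [Finset.sum_range_succ, Nat.sub_self, zero_mul, add_zero]
    have h1 : ∀ k ∈ range (n + 1), (n + 1 - k) * (k + t).choose (2 * t + 1)
        = (n - k) * (k + t).choose (2 * t + 1) + (k + t).choose (2 * t + 1) := by
      intro k hk
      rw [mem_range] at hk
      have h2 : n + 1 - k = (n - k) + 1 := by omega
      rw [h2, add_mul, one_mul]
    rw [Finset.sum_congr rfl h1, Finset.sum_add_distrib, ih, hockey]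
    have e1 : n + 1 + t + 1 = n + t + 2 := by ring
    rw [e1]
    have h : (n + t + 2).choose (2 * t + 3)
        = (n + t + 1).choose (2 * t + 2) + (n + t + 1).choose (2 * t + 3) :=
      Nat.choose_succ_succ' (n + t + 1) (2 * t + 2)
    omega

lemma vand (t n : ℕ) : ∑ ab ∈ Finset.HasAntidiagonal.antidiagonal n,
    ab.1 * (ab.2 + t).choose (2 * t + 1) = (n + t + 1).choose (2 * t + 3) := by
  rw [Finset.Nat.sum_antidiagonal_eq_sum_range_succ
    (fun a b => a * (b + t).choose (2 * t + 1))]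
  rw [← Finset.sum_range_reflect]
  rw [← vandG t n]
  refine Finset.sum_congr rfl fun j hj => ?_
  rw [mem_range] at hj
  have h1 : n + 1 - 1 - j = n - j := by omega
  have h2 : n - (n - j) = j := by omega
  simp only [h1, h2]

lemma antidiagonalTuple_succ_eq (k n : ℕ) :
    Finset.Nat.antidiagonalTuple (k + 1) n
      = (Finset.HasAntidiagonal.antidiagonal n).biUnion fun p =>
          (Finset.Nat.antidiagonalTuple k p.2).map
            ⟨Fin.cons p.1, Fin.cons_right_injective (α := fun _ => ℕ) p.1⟩ := by
  ext f
  simp only [Finset.Nat.mem_antidiagonalTuple, mem_biUnion, mem_map,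
    Finset.HasAntidiagonal.mem_antidiagonal, Function.Embedding.coeFn_mk, Prod.exists]
  constructor
  · intro hf
    refine ⟨f 0, ∑ i : Fin k, f i.succ, ?_, Fin.tail f, ?_, Fin.cons_self_tail f⟩
    · rw [← hf, Fin.sum_univ_succ]
    · rfl
  · rintro ⟨a, b, hab, g, hg, rfl⟩
    rw [Fin.sum_cons, hg, hab]

lemma sum_antidiagonalTuple_succ {M : Type*} [AddCommMonoid M] (k n : ℕ)
    (g : (Fin (k + 1) → ℕ) → M) :
    ∑ f ∈ Finset.Nat.antidiagonalTuple (k + 1) n, g f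
      = ∑ p ∈ Finset.HasAntidiagonal.antidiagonal n,
          ∑ x ∈ Finset.Nat.antidiagonalTuple k p.2, g (Fin.cons p.1 x) := by
  rw [antidiagonalTuple_succ_eq, Finset.sum_biUnion]
  · refine Finset.sum_congr rfl fun p _ => ?_
    rw [Finset.sum_map]
    rfl
  · intro p hp q hq hpq
    intro s hs1 hs2 f hf
    have h1 := hs1 hf
    have h2 := hs2 hf
    simp only [mem_map, Function.Embedding.coeFn_mk] at h1 h2
    obtain ⟨x, hx, rfl⟩ := h1
    obtain ⟨y, hy, hyx⟩ := h2
    exfalso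
    apply hpq
    have e0 : q.1 = p.1 := by
      have := congrFun hyx 0
      simpa using this
    rw [Finset.Nat.mem_antidiagonalTuple] at hx hy
    have e1 : (Fin.cons q.1 y : Fin (k+1) → ℕ) = Fin.cons p.1 x := hyx
    have e2 : q.2 = p.2 := by
      have : Fin.tail (Fin.cons q.1 y : Fin (k+1) → ℕ)
          = Fin.tail (Fin.cons p.1 x : Fin (k+1) → ℕ) := by rw [e1]
      simp only [Fin.tail_cons] at this
      rw [← hx, ← hy, this]
    exact Prod.ext e0.symm e2.symm

/-- The sum of the products `j₀ ⋯ j_t` over all compositions of `n` into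
`t+1` positive parts equals `C(n + t, 2t + 1)`. -/
theorem sum_prod_compositions_eq_choose (n t : ℕ) :
    ∑ f ∈ (Finset.Nat.antidiagonalTuple (t + 1) n).filter (fun f => ∀ i, 0 < f i),
      ∏ i, f i = Nat.choose (n + t) (2 * t + 1) := by
  induction t generalizing n with
  | zero =>
    rw [Finset.sum_filter, Finset.Nat.antidiagonalTuple_one, sum_singleton]
    simp only [Fin.forall_fin_one, Matrix.cons_val_fin_one, Fin.prod_univ_one]
    rcases Nat.eq_zero_or_pos n with h | h
    · subst h; simp
    · rw [if_pos (fun _ => h)]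
      simp [Nat.choose_one_right]
  | succ t ih =>
    rw [Finset.sum_filter, sum_antidiagonalTuple_succ]
    have step : ∀ p ∈ Finset.HasAntidiagonal.antidiagonal n,
        (∑ x ∈ Finset.Nat.antidiagonalTuple (t + 1) p.2,
          if ∀ i, 0 < (Fin.cons p.1 x : Fin (t+2) → ℕ) i
            then ∏ i, (Fin.cons p.1 x : Fin (t+2) → ℕ) i else 0)
        = p.1 * (p.2 + t).choose (2 * t + 1) := by
      intro p _
      have hcond : ∀ x : Fin (t+1) → ℕ,
          (∀ i, 0 < (Fin.cons p.1 x : Fin (t+2) → ℕ) i) ↔ (0 < p.1 ∧ ∀ i, 0 < x i) := by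
        intro x
        constructor
        · intro h
          exact ⟨by simpa using h 0, fun i => by simpa using h i.succ⟩
        · rintro ⟨h1, h2⟩ i
          refine Fin.cases ?_ ?_ i
          · simpa using h1
          · intro j; simpa using h2 j
      calc (∑ x ∈ Finset.Nat.antidiagonalTuple (t + 1) p.2,
            if ∀ i, 0 < (Fin.cons p.1 x : Fin (t+2) → ℕ) i
              then ∏ i, (Fin.cons p.1 x : Fin (t+2) → ℕ) i else 0)
          = ∑ x ∈ Finset.Nat.antidiagonalTuple (t + 1) p.2,
            p.1 * (if ∀ i, 0 < x i then ∏ i, x i else 0) := by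
            refine Finset.sum_congr rfl fun x _ => ?_
            by_cases h2 : ∀ i, 0 < (Fin.cons p.1 x : Fin (t+2) → ℕ) i
            · rw [if_pos h2, if_pos ((hcond x).mp h2).2, Fin.prod_cons]
            · rw [if_neg h2]
              by_cases h3 : ∀ i, 0 < x i
              · rw [if_pos h3]
                have hp0 : p.1 = 0 := by
                  by_contra hc
                  exact h2 ((hcond x).mpr ⟨Nat.pos_of_ne_zero hc, h3⟩)
                rw [hp0, zero_mul]
              · rw [if_neg h3, mul_zero]
        _ = p.1 * ∑ x ∈ Finset.Nat.antidiagonalTuple (t + 1) p.2,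
              (if ∀ i, 0 < x i then ∏ i, x i else 0) := by rw [Finset.mul_sum]
        _ = p.1 * (p.2 + t).choose (2 * t + 1) := by rw [← Finset.sum_filter, ih p.2]
    rw [Finset.sum_congr rfl step, vand]
    congr 1
end

section
/- Let C be a set of labeled trees on n vertices such that any two distinct trees in C share at most one common edge (i.e., the pairwise tree distance is at least n-2). Then |C| ≤ n. -/
private lemma nat_mul_sub_one (x : ℕ) : x * (x - 1) = x * x - x := by
  cases x with
  | zero => simp
  | succ k =>
    have h : (k + 1) * (k + 1) = (k + 1) * k + (k + 1) := by ring
    rw [Nat.succ_sub_one, h, Nat.add_sub_cancel]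

/-- If `C` is a set of labeled trees on `n ≥ 3` vertices such that any two
distinct trees of `C` share at most one common edge, then `|C| ≤ n`. -/
theorem card_le_of_pairwise_share_at_most_one_edge (n : ℕ) (hn : 3 ≤ n)
    (C : Finset (SimpleGraph (Fin n))) (htree : ∀ T ∈ C, T.IsTree)
    (hint : ∀ T₁ ∈ C, ∀ T₂ ∈ C, T₁ ≠ T₂ →
      (T₁.edgeSet ∩ T₂.edgeSet).ncard ≤ 1) :
    C.card ≤ n := by
  classical
  by_contra hcon
  push_neg at hcon
  set m := C.card with hm
  set E := (⊤ : SimpleGraph (Fin n)).edgeFinset with hE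
  set d : Sym2 (Fin n) → ℕ := fun e => (C.filter fun T => e ∈ T.edgeFinset).card with hd
  have hsub : ∀ T ∈ C, T.edgeFinset ⊆ E := fun T _ =>
    SimpleGraph.edgeFinset_mono le_top
  -- first double count
  have h1 : ∑ e ∈ E, d e = m * (n - 1) := by
    have hswap : ∑ e ∈ E, d e = ∑ T ∈ C, (E.filter fun e => e ∈ T.edgeFinset).card := by
      simp_rw [hd, Finset.card_filter]
      exact Finset.sum_comm
    rw [hswap]
    rw [Finset.sum_congr rfl fun T hT => ?_]
    · rw [Finset.sum_const, smul_eq_mul]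
    · have hfe : E.filter (fun e => e ∈ T.edgeFinset) = T.edgeFinset := by
        ext e
        simp only [Finset.mem_filter, and_iff_right_iff_imp]
        exact fun he => hsub T hT he
      rw [hfe]
      have := (htree T hT).card_edgeFinset
      rw [Fintype.card_fin] at this
      omega
  -- second double count
  have h2 : ∑ e ∈ E, d e * (d e - 1) ≤ m * m - m := by
    have step : ∀ e, d e * (d e - 1) =
        (C.offDiag.filter fun p => e ∈ p.1.edgeFinset ∧ e ∈ p.2.edgeFinset).card := by
      intro e
      have hod : (C.offDiag.filter fun p => e ∈ p.1.edgeFinset ∧ e ∈ p.2.edgeFinset)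
          = (C.filter fun T => e ∈ T.edgeFinset).offDiag := by
        ext p
        simp only [Finset.mem_filter, Finset.mem_offDiag]
        tauto
      rw [hod, Finset.offDiag_card, hd, nat_mul_sub_one]
    calc ∑ e ∈ E, d e * (d e - 1)
        = ∑ p ∈ C.offDiag, (E.filter fun e => e ∈ p.1.edgeFinset ∧ e ∈ p.2.edgeFinset).card := by
          simp_rw [step, Finset.card_filter]
          exact Finset.sum_comm
      _ ≤ ∑ _p ∈ C.offDiag, 1 := by
          apply Finset.sum_le_sum
          rintro ⟨T₁, T₂⟩ hp
          rw [Finset.mem_offDiag] at hp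
          have hfe : (E.filter fun e => e ∈ T₁.edgeFinset ∧ e ∈ T₂.edgeFinset)
              = T₁.edgeFinset ∩ T₂.edgeFinset := by
            ext e
            simp only [Finset.mem_filter, Finset.mem_inter, and_iff_right_iff_imp]
            exact fun he => hsub T₁ hp.1 he.1
          rw [hfe]
          have := hint T₁ hp.1 T₂ hp.2.1 hp.2.2
          rwa [Set.ncard_eq_toFinset_card', Set.toFinset_inter] at this
      _ = m * m - m := by rw [Finset.sum_const, smul_eq_mul, mul_one, Finset.offDiag_card]
  -- Cauchy-Schwarz
  have hcs : (∑ e ∈ E, d e) ^ 2 ≤ E.card * ∑ e ∈ E, d e * d e := by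
    have hz := sq_sum_le_card_mul_sum_sq (s := E) (f := fun e => (d e : ℤ))
    have h' : ((∑ e ∈ E, d e : ℕ) : ℤ) ^ 2 ≤ (E.card : ℤ) * ∑ e ∈ E, (d e : ℤ) * (d e : ℤ) := by
      push_cast
      simpa [sq] using hz
    exact_mod_cast h'
  have hsq : ∑ e ∈ E, d e * d e = (∑ e ∈ E, d e * (d e - 1)) + ∑ e ∈ E, d e := by
    rw [← Finset.sum_add_distrib]
    apply Finset.sum_congr rfl
    intro e _
    rw [nat_mul_sub_one]
    rcases Nat.eq_zero_or_pos (d e) with h | h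
    · simp [h]
    · have hle : d e ≤ d e * d e := Nat.le_mul_of_pos_left _ h
      omega
  -- count edges of complete graph
  have hdvd : 2 ∣ n * (n - 1) := by
    rcases Nat.even_or_odd n with h | h
    · exact Dvd.dvd.mul_right h.two_dvd _
    · have he : Even (n - 1) := Nat.Odd.sub_odd h odd_one
      exact Dvd.dvd.mul_left he.two_dvd _
  have hEcard : 2 * E.card = n * (n - 1) := by
    rw [hE, SimpleGraph.card_edgeFinset_top_eq_card_choose_two, Fintype.card_fin,
      Nat.choose_two_right, Nat.mul_div_cancel' hdvd]
  -- combine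
  have key : (m * (n - 1)) ^ 2 ≤ E.card * ((m * m - m) + m * (n - 1)) := by
    have htot : (∑ e ∈ E, d e) ^ 2 ≤ E.card * ((m * m - m) + m * (n - 1)) := by
      refine hcs.trans ?_
      rw [hsq]
      exact Nat.mul_le_mul_left _ (Nat.add_le_add h2 h1.le)
    rwa [h1] at htot
  have key2 : 2 * (m * (n - 1)) ^ 2 ≤ n * (n - 1) * ((m * m - m) + m * (n - 1)) :=
    calc 2 * (m * (n - 1)) ^ 2 ≤ 2 * (E.card * ((m * m - m) + m * (n - 1))) :=
          Nat.mul_le_mul_left 2 key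
      _ = (2 * E.card) * ((m * m - m) + m * (n - 1)) := by ring
      _ = n * (n - 1) * ((m * m - m) + m * (n - 1)) := by rw [hEcard]
  clear h1 h2 hcs hsq hdvd hEcard key hsub htree hint
  clear_value m E d
  clear hd hE hm d E C
  obtain ⟨a, ha⟩ : ∃ a, n = a + 3 := ⟨n - 3, by omega⟩
  obtain ⟨b, hb⟩ : ∃ b, m = a + 4 + b := ⟨m - (a + 4), by omega⟩
  subst ha
  rw [hb] at key2
  have e1 : a + 3 - 1 = a + 2 := by omega
  have e2 : (a + 4 + b) * (a + 4 + b) - (a + 4 + b) = (a + 4 + b) * (a + 3 + b) := by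
    have h3 : (a + 4 + b) * (a + 4 + b) = (a + 4 + b) * (a + 3 + b) + (a + 4 + b) := by ring
    rw [h3, Nat.add_sub_cancel]
  rw [e1, e2] at key2
  have expand : 2 * ((a + 4 + b) * (a + 2)) ^ 2 =
      (a + 3) * (a + 2) * ((a + 4 + b) * (a + 3 + b) + (a + 4 + b) * (a + 2))
        + (a + 2) * (a + 4 + b) * (a + a * b + b + 1) := by ring
  have hpos : 0 < (a + 2) * (a + 4 + b) * (a + a * b + b + 1) := by positivity
  rw [expand] at key2
  exact ((Nat.le_of_add_le_add_left (key2.trans_eq (Nat.add_zero _).symm)).trans_lt hpos).false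
end

section
/- Let C be a set of labeled trees on n vertices with pairwise tree distance at least d (i.e., any two distinct trees share at most n-1-d common edges). Then |C| · C(n-1, d-1) ≤ F(n, d), where F(n,d) is the number of labeled forests on n vertices with exactly d components. (Sphere-packing bound: the forests obtained by deleting d-1 edges from distinct codeword trees are all distinct.) -/
open SimpleGraph Finset

variable {V : Type*}

private lemma reach_cases {G : SimpleGraph V} {u v a b : V} (h : G.Reachable a b) :
    (G \ fromEdgeSet {s(u,v)}).Reachable a b ∨
    ((G \ fromEdgeSet {s(u,v)}).Reachable a u ∧ (G \ fromEdgeSet {s(u,v)}).Reachable v b) ∨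
    ((G \ fromEdgeSet {s(u,v)}).Reachable a v ∧ (G \ fromEdgeSet {s(u,v)}).Reachable u b) := by
  obtain ⟨p⟩ := h
  induction p with
  | nil => exact Or.inl (Reachable.refl _)
  | @cons a x b hax q ih =>
    by_cases he : s(a, x) = s(u, v)
    · rw [Sym2.eq_iff] at he
      rcases he with ⟨rfl, rfl⟩ | ⟨rfl, rfl⟩
      · rcases ih with h1 | ⟨h1, h2⟩ | ⟨h1, h2⟩
        · exact Or.inr (Or.inl ⟨Reachable.refl _, h1⟩)
        · exact Or.inr (Or.inl ⟨Reachable.refl _, h2⟩)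
        · exact Or.inl h2
      · rcases ih with h1 | ⟨h1, h2⟩ | ⟨h1, h2⟩
        · exact Or.inr (Or.inr ⟨Reachable.refl _, h1⟩)
        · exact Or.inl h2
        · exact Or.inr (Or.inr ⟨Reachable.refl _, h2⟩)
    · have hadj : (G \ fromEdgeSet {s(u,v)}).Adj a x := by
        simp only [sdiff_adj, fromEdgeSet_adj, Set.mem_singleton_iff]
        exact ⟨hax, fun hc => he hc.1⟩
      rcases ih with h1 | ⟨h1, h2⟩ | ⟨h1, h2⟩
      · exact Or.inl (hadj.reachable.trans h1)
      · exact Or.inr (Or.inl ⟨hadj.reachable.trans h1, h2⟩)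
      · exact Or.inr (Or.inr ⟨hadj.reachable.trans h1, h2⟩)

private lemma card_cc_delete [Finite V] {G : SimpleGraph V} {u v : V}
    (huv : G.Adj u v) (hbr : ¬ (G \ fromEdgeSet {s(u,v)}).Reachable u v) :
    Nat.card (G \ fromEdgeSet {s(u,v)}).ConnectedComponent
      = Nat.card G.ConnectedComponent + 1 := by
  classical
  set G' := G \ fromEdgeSet {s(u,v)} with hG'
  have hle : G' ≤ G := sdiff_le
  have hmono : ∀ {a b : V}, G'.Reachable a b → G.Reachable a b := by
    rintro a b ⟨p⟩; exact ⟨p.mapLe hle⟩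
  -- the normalizing map
  let ρ : V → G'.ConnectedComponent := fun a =>
    if G'.Reachable a v then G'.connectedComponentMk u else G'.connectedComponentMk a
  have hρ : ∀ a b : V, G.Reachable a b → ρ a = ρ b := by
    intro a b hab
    rcases reach_cases (u := u) (v := v) hab with h1 | ⟨h1, h2⟩ | ⟨h1, h2⟩
    · by_cases hv : G'.Reachable a v
      · simp only [ρ, if_pos hv, if_pos (show G'.Reachable b v from h1.symm.trans hv)]
      · have hv' : ¬ G'.Reachable b v := fun hc => hv (h1.trans hc)
        simp only [ρ, if_neg hv, if_neg hv']
        exact ConnectedComponent.sound h1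
    · have hav : ¬ G'.Reachable a v := fun hc => hbr (h1.symm.trans hc)
      simp only [ρ, if_neg hav, if_pos (show G'.Reachable b v from h2.symm)]
      exact ConnectedComponent.sound h1
    · have hbv : ¬ G'.Reachable b v := fun hc => hbr (h2.trans hc)
      simp only [ρ, if_pos (show G'.Reachable a v from h1), if_neg hbv]
      exact ConnectedComponent.sound h2
  let φ : G'.ConnectedComponent → G.ConnectedComponent :=
    ConnectedComponent.map (Hom.ofLE hle)
  let g : G'.ConnectedComponent → G.ConnectedComponent ⊕ Unit := fun x =>
    if x = G'.connectedComponentMk v then Sum.inr () else Sum.inl (φ x)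
  let h : G.ConnectedComponent ⊕ Unit → G'.ConnectedComponent := fun y =>
    match y with
    | Sum.inr _ => G'.connectedComponentMk v
    | Sum.inl c => Quot.lift ρ (fun a b hab => hρ a b ⟨hab.some⟩) c
  have hgh : Function.LeftInverse g h := by
    rintro (c | ⟨⟩)
    · refine c.ind (fun a => ?_)
      show g (ρ a) = Sum.inl (G.connectedComponentMk a)
      by_cases hv : G'.Reachable a v
      · have hne : G'.connectedComponentMk u ≠ G'.connectedComponentMk v := by
          exact fun hc => hbr (ConnectedComponent.eq.mp hc)
        simp only [ρ, g, if_pos hv, if_neg hne]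
        have : φ (G'.connectedComponentMk u) = G.connectedComponentMk u := rfl
        rw [this, Sum.inl.injEq, ConnectedComponent.eq]
        exact ((hmono hv).trans huv.symm.reachable).symm
      · have hne : G'.connectedComponentMk a ≠ G'.connectedComponentMk v := by
          exact fun hc => hv (ConnectedComponent.eq.mp hc)
        simp only [ρ, g, if_neg hv, if_neg hne]
        rfl
    · show g (G'.connectedComponentMk v) = Sum.inr ()
      simp [g]
  have hhg : Function.RightInverse g h := by
    intro x
    refine x.ind (fun a => ?_)
    by_cases hv : G'.connectedComponentMk a = G'.connectedComponentMk v
    · simp only [g, if_pos hv, h]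
      exact hv.symm
    · simp only [g, if_neg hv]
      show ρ a = G'.connectedComponentMk a
      have hav : ¬ G'.Reachable a v := by rwa [ConnectedComponent.eq] at hv
      simp only [ρ, if_neg hav]
  have : Nat.card G'.ConnectedComponent = Nat.card (G.ConnectedComponent ⊕ Unit) :=
    Nat.card_eq_of_bijective g ⟨hhg.injective, hgh.surjective⟩
  rw [this, Nat.card_sum]
  simp

private lemma forest_card [Fintype V] :
    ∀ (k : ℕ) (G : SimpleGraph V), G.IsAcyclic → G.edgeSet.ncard = k →
      Nat.card G.ConnectedComponent + k = Fintype.card V := by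
  intro k
  induction k with
  | zero =>
    intro G _ h0
    rw [Set.ncard_eq_zero (Set.toFinite _), edgeSet_eq_empty] at h0
    subst h0
    have hb : Function.Bijective ((⊥ : SimpleGraph V).connectedComponentMk) := by
      constructor
      · intro a b hab
        rw [ConnectedComponent.eq, reachable_bot] at hab; exact hab
      · intro c; exact c.ind fun a => ⟨a, rfl⟩
    have heq := Nat.card_eq_of_bijective _ hb
    rw [add_zero, ← heq, Nat.card_eq_fintype_card]
  | succ k ih =>
    intro G hG hk
    have hne : G.edgeSet.Nonempty := by
      rw [Set.nonempty_iff_ne_empty]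
      intro hc; rw [hc] at hk; simp at hk
    obtain ⟨e, he⟩ := hne
    revert he
    refine Sym2.ind (fun u v he => ?_) e
    have huv : G.Adj u v := he
    have hbr : G.IsBridge s(u, v) := isAcyclic_iff_forall_edge_isBridge.mp hG he
    have hbr' : ¬ (G \ fromEdgeSet {s(u,v)}).Reachable u v := isBridge_iff.mp hbr
    set G' := G \ fromEdgeSet {s(u,v)} with hG'def
    have hedge : G'.edgeSet = G.edgeSet \ {s(u,v)} := by
      rw [hG'def, edgeSet_sdiff, edgeSet_fromEdgeSet, edgeSet_sdiff_sdiff_isDiag]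
    have hG'acyc : G'.IsAcyclic := by
      intro w c hc
      exact hG (c.mapLe sdiff_le) ((Walk.mapLe_isCycle sdiff_le).mpr hc)
    have hcard' : G'.edgeSet.ncard = k := by
      rw [hedge, Set.ncard_diff_singleton_of_mem he, hk]
      omega
    have := ih G' hG'acyc hcard'
    have hcc := card_cc_delete huv hbr'
    rw [← hG'def] at hcc
    omega

/-- Sphere-packing bound: if `C` is a set of labeled trees on `n` vertices
whose pairwise tree distance is at least `d`, then
`|C| · C(n-1, d-1)` is at most the number `F(n,d)` of labeled forests on `n`
vertices with exactly `d` connected components. -/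
theorem sphere_packing_bound (n d : ℕ) (hd : 1 ≤ d) (hdn : d ≤ n)
    (C : Finset (SimpleGraph (Fin n))) (htree : ∀ T ∈ C, T.IsTree)
    (hdist : ∀ T₁ ∈ C, ∀ T₂ ∈ C, T₁ ≠ T₂ →
      d ≤ (n - 1) - (T₁.edgeSet ∩ T₂.edgeSet).ncard) :
    C.card * Nat.choose (n - 1) (d - 1)
      ≤ {G : SimpleGraph (Fin n) |
          G.IsAcyclic ∧ Nat.card G.ConnectedComponent = d}.ncard := by
  classical
  set S : Set (SimpleGraph (Fin n)) :=
    {G : SimpleGraph (Fin n) | G.IsAcyclic ∧ Nat.card G.ConnectedComponent = d} with hS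
  -- the packing map
  let A : SimpleGraph (Fin n) → Finset (SimpleGraph (Fin n)) := fun T =>
    ((T.edgeFinset).powersetCard (n - d)).image
      (fun s : Finset (Sym2 (Fin n)) => fromEdgeSet (↑s : Set (Sym2 (Fin n))))
  -- basic facts about members of `A T`
  have hmem : ∀ T ∈ C, ∀ G ∈ A T, G ∈ S ∧ G.edgeSet ⊆ T.edgeSet ∧ G.edgeSet.ncard = n - d := by
    intro T hT G hG
    obtain ⟨s, hs, rfl⟩ := Finset.mem_image.mp hG
    rw [Finset.mem_powersetCard] at hs
    have hsub : (↑s : Set (Sym2 (Fin n))) ⊆ T.edgeSet := by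
      rw [← coe_edgeFinset]
      exact Finset.coe_subset.mpr hs.1
    have hedge : (fromEdgeSet (↑s : Set (Sym2 (Fin n)))).edgeSet = ↑s := by
      rw [edgeSet_fromEdgeSet]
      ext e
      simp only [Set.mem_diff, Set.mem_setOf_eq, and_iff_left_iff_imp]
      intro hes
      exact T.not_isDiag_of_mem_edgeSet (hsub hes)
    have hle : fromEdgeSet (↑s : Set (Sym2 (Fin n))) ≤ T := by
      calc fromEdgeSet (↑s : Set (Sym2 (Fin n))) ≤ fromEdgeSet T.edgeSet := fromEdgeSet_mono hsub
        _ = T := fromEdgeSet_edgeSet T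
    have hacyc : (fromEdgeSet (↑s : Set (Sym2 (Fin n)))).IsAcyclic := by
      intro w c hc
      exact (htree T hT).2 (c.mapLe hle) ((Walk.mapLe_isCycle hle).mpr hc)
    have hncard : (fromEdgeSet (↑s : Set (Sym2 (Fin n)))).edgeSet.ncard = n - d := by
      rw [hedge, Set.ncard_coe_finset, hs.2]
    have := forest_card (n - d) _ hacyc hncard
    rw [Fintype.card_fin] at this
    refine ⟨⟨hacyc, by omega⟩, ?_, hncard⟩
    rw [hedge]; exact hsub
  -- each `A T` has the right cardinality
  have hTedge : ∀ T ∈ C, T.edgeFinset.card = n - 1 := by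
    intro T hT
    have := (htree T hT).card_edgeFinset
    rw [Fintype.card_fin] at this
    omega
  have hAcard : ∀ T ∈ C, (A T).card = Nat.choose (n - 1) (d - 1) := by
    intro T hT
    have hE : ∀ s ∈ (T.edgeFinset).powersetCard (n - d),
        (fromEdgeSet (↑s : Set (Sym2 (Fin n)))).edgeSet = ↑s := by
      intro s hs
      rw [Finset.mem_powersetCard] at hs
      have hsub : (↑s : Set (Sym2 (Fin n))) ⊆ T.edgeSet := by
        rw [← coe_edgeFinset]
        exact Finset.coe_subset.mpr hs.1
      rw [edgeSet_fromEdgeSet]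
      ext e
      simp only [Set.mem_diff, Set.mem_setOf_eq, and_iff_left_iff_imp]
      intro hes
      exact T.not_isDiag_of_mem_edgeSet (hsub hes)
    have hinj : Set.InjOn (fun s : Finset (Sym2 (Fin n)) => fromEdgeSet (↑s : Set (Sym2 (Fin n))))
        ↑((T.edgeFinset).powersetCard (n - d)) := by
      intro s₁ h₁ s₂ h₂ heq
      rw [Finset.mem_coe] at h₁ h₂
      have hEq := congrArg SimpleGraph.edgeSet heq
      rw [hE s₁ h₁, hE s₂ h₂] at hEq
      exact Finset.coe_inj.mp hEq
    rw [Finset.card_image_of_injOn hinj, Finset.card_powersetCard, hTedge T hT]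
    have h1 : n - d = (n - 1) - (d - 1) := by omega
    rw [h1, Nat.choose_symm (by omega)]
  -- disjointness
  have hdisj : ∀ T₁ ∈ C, ∀ T₂ ∈ C, T₁ ≠ T₂ → Disjoint (A T₁) (A T₂) := by
    intro T₁ h₁ T₂ h₂ hne
    rw [Finset.disjoint_left]
    intro G hG1 hG2
    obtain ⟨_, hsub1, hnc⟩ := hmem T₁ h₁ G hG1
    obtain ⟨_, hsub2, _⟩ := hmem T₂ h₂ G hG2
    have hsub : G.edgeSet ⊆ T₁.edgeSet ∩ T₂.edgeSet := Set.subset_inter hsub1 hsub2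
    have hle : n - d ≤ (T₁.edgeSet ∩ T₂.edgeSet).ncard := by
      rw [← hnc]; exact Set.ncard_le_ncard hsub (Set.toFinite _)
    have := hdist T₁ h₁ T₂ h₂ hne
    omega
  -- put it together
  have hsum : C.card * Nat.choose (n - 1) (d - 1) = (C.biUnion A).card := by
    rw [Finset.card_biUnion hdisj]
    rw [Finset.sum_congr rfl hAcard, Finset.sum_const, smul_eq_mul]
  rw [hsum]
  have hsubS : (↑(C.biUnion A) : Set (SimpleGraph (Fin n))) ⊆ S := by
    intro G hG
    rw [Finset.coe_biUnion] at hG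
    simp only [Set.mem_iUnion] at hG
    obtain ⟨T, hT, hGT⟩ := hG
    exact (hmem T hT G hGT).1
  calc (C.biUnion A).card = (↑(C.biUnion A) : Set (SimpleGraph (Fin n))).ncard :=
        (Set.ncard_coe_finset _).symm
    _ ≤ S.ncard := Set.ncard_le_ncard hsubS (Set.toFinite _)
end

section
/- For a fixed tree T on n vertices that is a path (line), the size of the ball of radius 1 around T in tree distance equals (n-1)(n-2)(n+3)/6 + 1. -/
open SimpleGraph Finset Set

namespace LineBallAux

variable {V : Type*}

lemma walk_closed {G : SimpleGraph V} {A : Set V} (h : ∀ u v, G.Adj u v → u ∈ A → v ∈ A) :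
    ∀ {u v : V}, (w : G.Walk u v) → u ∈ A → v ∈ A := by
  intro u v w
  induction w with
  | nil => exact id
  | cons hadj p ih => exact fun hu => ih (h _ _ hadj hu)

lemma card_le_of_connected [Fintype V] {G : SimpleGraph V} (hG : G.Connected) :
    Fintype.card V ≤ G.edgeSet.ncard + 1 := by
  classical
  obtain ⟨root⟩ := hG.nonempty
  have key : ∀ w : V, ∃ y, w ≠ root → G.Adj w y ∧ G.dist y root + 1 = G.dist w root := by
    intro w
    by_cases hw : w = root
    · exact ⟨root, fun h => absurd hw h⟩
    · obtain ⟨p, hp⟩ := (hG.preconnected w root).exists_walk_length_eq_dist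
      cases p with
      | nil => exact absurd rfl hw
      | @cons _ x _ hadj q =>
        refine ⟨x, fun _ => ⟨hadj, ?_⟩⟩
        have h1 : G.dist x root ≤ q.length := dist_le q
        have h2 : G.dist w root ≤ G.dist x root + 1 := by
          obtain ⟨q', hq'⟩ := q.reachable.exists_walk_length_eq_dist
          have := dist_le (Walk.cons hadj q')
          simp only [Walk.length_cons, hq'] at this
          omega
        have h3 : q.length + 1 = G.dist w root := by
          simpa [Walk.length_cons] using hp
        omega
  choose next hnext using key
  have hmap : ∀ w ∈ {w : V | w ≠ root}, s(w, next w) ∈ G.edgeSet := fun w hw => (hnext w hw).1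
  have hinj : Set.InjOn (fun w => s(w, next w)) {w : V | w ≠ root} := by
    intro w1 h1 w2 h2 heq
    simp only [Sym2.eq, Sym2.rel_iff', Prod.mk.injEq, Prod.swap_prod_mk] at heq
    rcases heq with ⟨h, -⟩ | ⟨ha, hb⟩
    · exact h
    · have d1 := (hnext w1 h1).2
      have d2 := (hnext w2 h2).2
      rw [← ha] at d2
      rw [hb] at d1
      exfalso
      omega
  have hle := Set.ncard_le_ncard_of_injOn _ hmap hinj (Set.toFinite _)
  have hA : ({w : V | w ≠ root}).ncard = Fintype.card V - 1 := by
    have he : {w : V | w ≠ root} = (Set.univ : Set V) \ {root} := by ext x; simp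
    rw [he, Set.ncard_diff_singleton_of_mem (Set.mem_univ root),
      Set.ncard_univ, Nat.card_eq_fintype_card]
  have : Nonempty V := hG.nonempty
  have hpos : 1 ≤ Fintype.card V := Fintype.card_pos
  omega

lemma isTree_of_connected_of_ncard [Fintype V] {G : SimpleGraph V} (hG : G.Connected)
    (hcard : G.edgeSet.ncard + 1 = Fintype.card V) : G.IsTree := by
  classical
  refine ⟨hG, ?_⟩
  intro u p hp
  have hlen : p.edges.length = p.length := p.length_edges
  have h3 := hp.three_le_length
  have hne : p.edges ≠ [] := by
    intro h; rw [h] at hlen; simp at hlen; omega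
  obtain ⟨e, he⟩ : ∃ e, e ∈ p.edges := List.exists_mem_of_ne_nil _ hne
  induction e using Sym2.ind with
  | _ v w =>
  have hvw : G.Adj v w := p.adj_of_mem_edges he
  have hnb : ¬ G.IsBridge s(v, w) := by
    rw [isBridge_iff_adj_and_forall_cycle_notMem]
    push_neg
    exact ⟨u, p, hp, he⟩
    exact hvw
  rw [isBridge_iff] at hnb
  push_neg at hnb
  have hreach := hnb
  set G' := G \ fromEdgeSet {s(v, w)} with hG'
  have hconn' : G'.Connected := by
    rw [connected_iff]
    refine ⟨?_, hG.nonempty⟩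
    intro x y
    obtain ⟨q⟩ := hG.preconnected x y
    clear hne he hlen
    induction q with
    | nil => exact Reachable.refl _
    | @cons a c b hadj r ih =>
      refine Reachable.trans ?_ ih
      by_cases hcase : s(a, c) = s(v, w)
      · rw [Sym2.eq_iff] at hcase
        rcases hcase with ⟨rfl, rfl⟩ | ⟨rfl, rfl⟩
        · exact hreach
        · exact hreach.symm
      · refine Adj.reachable ?_
        rw [hG', sdiff_adj, fromEdgeSet_adj]
        exact ⟨hadj, by tauto⟩
  have hE' : G'.edgeSet = G.edgeSet \ {s(v, w)} := by
    rw [hG']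
    simp [edgeSet_sdiff, edgeSet_fromEdgeSet, edgeSet_sdiff_sdiff_isDiag]
  have hmem : s(v, w) ∈ G.edgeSet := hvw
  have h1 : G'.edgeSet.ncard = G.edgeSet.ncard - 1 := by
    rw [hE']
    exact Set.ncard_diff_singleton_of_mem hmem
  have h2 := card_le_of_connected hconn'
  have h0 : 0 < G.edgeSet.ncard := by
    rw [Set.ncard_pos (Set.toFinite _)]
    exact ⟨_, hmem⟩
  omega

end LineBallAux

namespace LineBallAux

variable {m : ℕ}

def pe (σ : Fin (m+1) ≃ Fin (m+1)) (j : Fin m) : Sym2 (Fin (m+1)) :=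
  s(σ j.castSucc, σ j.succ)

lemma pe_inj (σ : Fin (m+1) ≃ Fin (m+1)) : Function.Injective (pe σ) := by
  intro j k h
  simp only [pe, Sym2.eq, Sym2.rel_iff', Prod.mk.injEq, Prod.swap_prod_mk] at h
  rcases h with ⟨h1, h2⟩ | ⟨h1, h2⟩ <;>
  · have v1 := congrArg Fin.val (σ.injective h1)
    have v2 := congrArg Fin.val (σ.injective h2)
    simp only [Fin.coe_castSucc, Fin.val_succ] at v1 v2
    ext
    omega

lemma pe_not_diag (σ : Fin (m+1) ≃ Fin (m+1)) (j : Fin m) : ¬ (pe σ j).IsDiag := by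
  rw [pe, Sym2.isDiag_iff_proj_eq]
  intro h
  have := congrArg Fin.val (σ.injective h)
  simp only [Fin.coe_castSucc, Fin.val_succ] at this
  omega

lemma mem_range_pe_iff (σ : Fin (m+1) ≃ Fin (m+1)) (a b : Fin (m+1)) :
    s(σ a, σ b) ∈ Set.range (pe σ) ↔ ((a:ℕ)+1 = b ∨ (b:ℕ)+1 = a) := by
  constructor
  · rintro ⟨j, hj⟩
    rw [pe, Sym2.eq_iff] at hj
    rcases hj with ⟨h1, h2⟩ | ⟨h1, h2⟩
    · left
      have v1 := congrArg Fin.val (σ.injective h1)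
      have v2 := congrArg Fin.val (σ.injective h2)
      simp only [Fin.coe_castSucc, Fin.val_succ] at v1 v2
      omega
    · right
      have v1 := congrArg Fin.val (σ.injective h1)
      have v2 := congrArg Fin.val (σ.injective h2)
      simp only [Fin.coe_castSucc, Fin.val_succ] at v1 v2
      omega
  · rintro (h | h)
    · have hb := b.isLt
      refine ⟨⟨(a:ℕ), by omega⟩, ?_⟩
      have h1 : (⟨(a:ℕ), by omega⟩ : Fin m).castSucc = a := by ext; simp
      have h2 : (⟨(a:ℕ), by omega⟩ : Fin m).succ = b := by ext; simp; omega
      rw [pe, h1, h2]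
    · have ha := a.isLt
      refine ⟨⟨(b:ℕ), by omega⟩, ?_⟩
      have h1 : (⟨(b:ℕ), by omega⟩ : Fin m).castSucc = b := by ext; simp
      have h2 : (⟨(b:ℕ), by omega⟩ : Fin m).succ = a := by ext; simp; omega
      rw [pe, h1, h2, Sym2.eq_swap]

lemma edgeSet_eq_range (σ : Fin (m+1) ≃ Fin (m+1)) {T : SimpleGraph (Fin (m+1))}
    (hσ : ∀ u v, T.Adj u v ↔ ∃ (i : Fin (m+1)) (h : (i : ℕ) + 1 < m+1),
      (u = σ i ∧ v = σ ⟨(i : ℕ) + 1, h⟩) ∨ (v = σ i ∧ u = σ ⟨(i : ℕ) + 1, h⟩)) :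
    T.edgeSet = Set.range (pe σ) := by
  ext e
  induction e using Sym2.ind with
  | _ u v =>
    rw [mem_edgeSet, hσ]
    constructor
    · rintro ⟨i, h, ⟨rfl, rfl⟩ | ⟨rfl, rfl⟩⟩
      · refine ⟨⟨(i:ℕ), by omega⟩, ?_⟩
        have h1 : (⟨(i:ℕ), by omega⟩ : Fin m).castSucc = i := by ext; simp
        have h2 : (⟨(i:ℕ), by omega⟩ : Fin m).succ = ⟨(i:ℕ)+1, h⟩ := by ext; simp
        rw [pe, h1, h2]
      · refine ⟨⟨(i:ℕ), by omega⟩, ?_⟩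
        have h1 : (⟨(i:ℕ), by omega⟩ : Fin m).castSucc = i := by ext; simp
        have h2 : (⟨(i:ℕ), by omega⟩ : Fin m).succ = ⟨(i:ℕ)+1, h⟩ := by ext; simp
        rw [pe, h1, h2, Sym2.eq_swap]
    · rintro ⟨j, hj⟩
      rw [pe, Sym2.eq_iff] at hj
      have hjlt := j.isLt
      refine ⟨j.castSucc, by simp, ?_⟩
      have hs : (⟨((j.castSucc):ℕ)+1, by simp⟩ : Fin (m+1)) = j.succ := by
        ext; simp
      rcases hj with ⟨h1, h2⟩ | ⟨h1, h2⟩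
      · left
        exact ⟨h1.symm, by rw [hs, h2]⟩
      · right
        exact ⟨h1.symm, by rw [hs, h2]⟩

lemma seg_reach {G : SimpleGraph (Fin (m+1))} (σ : Fin (m+1) ≃ Fin (m+1)) :
    ∀ (d : ℕ) (hd : d < m+1) (c : ℕ) (hc : c ≤ d)
      (_ : ∀ t (_ : c ≤ t) (_ : t + 1 ≤ d), G.Adj (σ ⟨t, by omega⟩) (σ ⟨t+1, by omega⟩)),
      G.Reachable (σ ⟨c, by omega⟩) (σ ⟨d, hd⟩) := by
  intro d
  induction d with
  | zero =>
    intro hd c hc _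
    have : c = 0 := by omega
    subst this
    exact Reachable.refl _
  | succ d ih =>
    intro hd c hc h
    by_cases hcd : c = d + 1
    · subst hcd
      exact Reachable.refl _
    · have hc' : c ≤ d := by omega
      have step : G.Adj (σ ⟨d, by omega⟩) (σ ⟨d+1, by omega⟩) := h d hc' (by omega)
      exact (ih (by omega) c hc' (fun t ht1 ht2 => h t ht1 (by omega))).trans step.reachable

lemma ncard_edgeSet_tree {G : SimpleGraph (Fin (m+1))} (h : G.IsTree) :
    G.edgeSet.ncard = m := by
  classical
  letI : Fintype G.edgeSet := Fintype.ofFinite _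
  have hc := h.card_edgeFinset
  rw [Fintype.card_fin] at hc
  rw [Set.ncard_eq_toFinset_card']
  have : G.edgeFinset = G.edgeSet.toFinset := rfl
  rw [this] at hc
  omega



def tset (m : ℕ) : Finset (Fin m × Fin (m+1) × Fin (m+1)) :=
  univ.filter fun x => (x.2.1 : ℕ) ≤ (x.1 : ℕ) ∧ (x.1 : ℕ) < (x.2.2 : ℕ) ∧
    ¬((x.2.1 : ℕ) = (x.1 : ℕ) ∧ (x.2.2 : ℕ) = (x.1 : ℕ) + 1)

lemma pair_card (m : ℕ) (j : Fin m) :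
    (univ.filter fun ab : Fin (m+1) × Fin (m+1) =>
      (ab.1:ℕ) ≤ (j:ℕ) ∧ (j:ℕ) < (ab.2:ℕ) ∧ ¬((ab.1:ℕ) = (j:ℕ) ∧ (ab.2:ℕ) = (j:ℕ)+1)).card
    = ((j:ℕ)+1) * (m - (j:ℕ)) - 1 := by
  classical
  have hj := j.isLt
  set jc : Fin (m+1) := ⟨(j:ℕ), by omega⟩ with hjc
  set js : Fin (m+1) := ⟨(j:ℕ)+1, by omega⟩ with hjs
  set s₀ : Finset (Fin (m+1) × Fin (m+1)) :=
    univ.filter (fun ab => (ab.1:ℕ) ≤ (j:ℕ) ∧ (j:ℕ) < (ab.2:ℕ)) with hs₀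
  have hset : (univ.filter fun ab : Fin (m+1) × Fin (m+1) =>
      (ab.1:ℕ) ≤ (j:ℕ) ∧ (j:ℕ) < (ab.2:ℕ) ∧ ¬((ab.1:ℕ) = (j:ℕ) ∧ (ab.2:ℕ) = (j:ℕ)+1))
      = s₀.erase (jc, js) := by
    ext ab
    simp only [hs₀, Finset.mem_erase, Finset.mem_filter, Finset.mem_univ, true_and,
      Ne, Prod.ext_iff, Fin.ext_iff, hjc, hjs]
    tauto
  have hmem : (jc, js) ∈ s₀ := by
    simp [hs₀, hjc, hjs]
  have hcard₀ : s₀.card = ((j:ℕ)+1) * (m - (j:ℕ)) := by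
    have hsplit : s₀ = (univ.filter fun a : Fin (m+1) => (a:ℕ) ≤ (j:ℕ)) ×ˢ
        (univ.filter fun b : Fin (m+1) => (j:ℕ) < (b:ℕ)) := by
      ext ab
      simp [hs₀, Finset.mem_product]
    have h1 : (univ.filter fun a : Fin (m+1) => (a:ℕ) ≤ (j:ℕ)) = Finset.Iic jc := by
      ext a; simp [Fin.le_def, hjc]
    have h2 : (univ.filter fun b : Fin (m+1) => (j:ℕ) < (b:ℕ)) = Finset.Ioi jc := by
      ext b; simp [Fin.lt_def, hjc]
    rw [hsplit, Finset.card_product, h1, h2, Fin.card_Iic, Fin.card_Ioi]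
    simp [hjc]
  rw [hset, Finset.card_erase_of_mem hmem, hcard₀]

lemma tset_card (m : ℕ) :
    (tset m).card = ∑ i ∈ Finset.range m, ((i+1) * (m - i) - 1) := by
  classical
  rw [tset, Finset.card_filter, Fintype.sum_prod_type]
  rw [← Fin.sum_univ_eq_sum_range]
  refine Finset.sum_congr rfl fun j _ => ?_
  rw [← pair_card m j, Finset.card_filter]

lemma gauss (k : ℕ) : 2 * ∑ i ∈ Finset.range k, (i+1) = k * (k+1) := by
  induction k with
  | zero => simp
  | succ k ih =>
    rw [Finset.sum_range_succ, Nat.mul_add, ih]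
    ring

lemma sum_prod (k : ℕ) : 6 * ∑ i ∈ Finset.range k, (i+1)*(k-i) = k*(k+1)*(k+2) := by
  induction k with
  | zero => simp
  | succ k ih =>
    have hsplit : ∑ i ∈ Finset.range (k+1), (i+1)*(k+1-i)
        = (∑ i ∈ Finset.range k, (i+1)*(k-i)) + (∑ i ∈ Finset.range k, (i+1)) + (k+1) := by
      rw [Finset.sum_range_succ]
      have hterm : ∀ i ∈ Finset.range k, (i+1)*(k+1-i) = (i+1)*(k-i) + (i+1) := by
        intro i hi
        rw [Finset.mem_range] at hi
        have h : k+1-i = (k-i)+1 := by omega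
        rw [h]
        ring
      rw [Finset.sum_congr rfl hterm, Finset.sum_add_distrib]
      have : k+1-k = 1 := by omega
      rw [this]
      ring
    rw [hsplit]
    have hg := gauss k
    calc 6 * ((∑ i ∈ Finset.range k, (i+1)*(k-i)) + (∑ i ∈ Finset.range k, (i+1)) + (k+1))
        = (6 * ∑ i ∈ Finset.range k, (i+1)*(k-i)) + 3*(2 * ∑ i ∈ Finset.range k, (i+1))
          + 6*(k+1) := by ring
      _ = k*(k+1)*(k+2) + 3*(k*(k+1)) + 6*(k+1) := by rw [ih, hg]
      _ = (k+1)*(k+2)*(k+3) := by ring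

lemma sum_main (k : ℕ) :
    ∑ i ∈ Finset.range k, ((i+1)*(k-i) - 1) = k*(k-1)*(k+4)/6 := by
  have hsub : ∑ i ∈ Finset.range k, ((i+1)*(k-i) - 1)
      = (∑ i ∈ Finset.range k, (i+1)*(k-i)) - k := by
    rw [Finset.sum_tsub_distrib]
    · simp
    · intro i hi
      rw [Finset.mem_range] at hi
      have : 0 < (i+1)*(k-i) := Nat.mul_pos (by omega) (by omega)
      omega
  have h := sum_prod k
  have hident : k*(k-1)*(k+4) + 6*k = k*(k+1)*(k+2) := by
    rcases k with _ | j
    · simp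
    · have : j+1-1 = j := by omega
      rw [this]
      ring
  omega

open SimpleGraph Finset Set

set_option maxHeartbeats 1000000 in
theorem main (m : ℕ) (T : SimpleGraph (Fin (m+1))) (hT : T.IsTree)
    (σ : Fin (m+1) ≃ Fin (m+1))
    (hσ : ∀ u v, T.Adj u v ↔ ∃ (i : Fin (m+1)) (h : (i : ℕ) + 1 < m+1),
      (u = σ i ∧ v = σ ⟨(i : ℕ) + 1, h⟩) ∨ (v = σ i ∧ u = σ ⟨(i : ℕ) + 1, h⟩)) :
    {T' : SimpleGraph (Fin (m+1)) | T'.IsTree ∧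
        (m + 1 - 1) - (T.edgeSet ∩ T'.edgeSet).ncard ≤ 1}.ncard
      = (m + 1 - 1) * (m + 1 - 2) * (m + 1 + 3) / 6 + 1 := by
  classical
  have hrange : T.edgeSet = Set.range (pe σ) := edgeSet_eq_range σ hσ
  have hEcard : T.edgeSet.ncard = m := ncard_edgeSet_tree hT
  set F : Fin m × Fin (m+1) × Fin (m+1) → SimpleGraph (Fin (m+1)) :=
    fun x => fromEdgeSet ((Set.range (pe σ) \ {pe σ x.1}) ∪ {s(σ x.2.1, σ x.2.2)}) with hF
  -- description of edge sets of F x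
  have hFedge : ∀ x : Fin m × Fin (m+1) × Fin (m+1), (x.2.1 : ℕ) < (x.2.2 : ℕ) →
      (F x).edgeSet = (Set.range (pe σ) \ {pe σ x.1}) ∪ {s(σ x.2.1, σ x.2.2)} := by
    rintro ⟨j, a, b⟩ hab
    replace hab : (a:ℕ) < (b:ℕ) := hab
    have hdiag : ∀ e ∈ (Set.range (pe σ) \ {pe σ j}) ∪ {s(σ a, σ b)}, ¬ e.IsDiag := by
      rintro e (⟨⟨k, rfl⟩, -⟩ | he)
      · exact pe_not_diag σ k
      · rw [Set.mem_singleton_iff] at he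
        subst he
        rw [Sym2.isDiag_iff_proj_eq]
        intro hcontra
        replace hcontra : σ a = σ b := hcontra
        have := congrArg Fin.val (σ.injective hcontra)
        omega
    rw [hF]
    simp only
    rw [edgeSet_fromEdgeSet]
    ext e
    constructor
    · exact fun he => he.1
    · exact fun he => ⟨he, hdiag e he⟩
  have hfnotin : ∀ (j : Fin m) (a b : Fin (m+1)), (a:ℕ) ≤ (j:ℕ) → (j:ℕ) < (b:ℕ) →
      ¬((a:ℕ) = (j:ℕ) ∧ (b:ℕ) = (j:ℕ)+1) → s(σ a, σ b) ∉ Set.range (pe σ) := by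
    intro j a b h1 h2 h3 hmem
    rw [mem_range_pe_iff] at hmem
    omega
  -- each F x with x ∈ tset is a tree at distance 1
  have htreeF : ∀ x ∈ tset m, (F x).IsTree := by
    rintro ⟨j, a, b⟩ hx
    simp only [tset, Finset.mem_filter, Finset.mem_univ, true_and] at hx
    obtain ⟨h1, h2, h3⟩ := hx
    replace h1 : (a:ℕ) ≤ (j:ℕ) := h1
    replace h2 : (j:ℕ) < (b:ℕ) := h2
    replace h3 : ¬((a:ℕ) = (j:ℕ) ∧ (b:ℕ) = (j:ℕ)+1) := h3
    have hj := j.isLt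
    have hES := hFedge (j, a, b) (lt_of_le_of_lt h1 h2)
    have hadjP : ∀ k : Fin m, k ≠ j → (F (j,a,b)).Adj (σ k.castSucc) (σ k.succ) := by
      intro k hk
      rw [← SimpleGraph.mem_edgeSet, hES]
      left
      refine ⟨⟨k, rfl⟩, ?_⟩
      rw [Set.mem_singleton_iff]
      exact fun hc => hk (pe_inj σ hc)
    have hadjf : (F (j,a,b)).Adj (σ a) (σ b) := by
      have hne : σ a ≠ σ b := fun hc => by
        have := congrArg Fin.val (σ.injective hc); omega
      rw [← SimpleGraph.mem_edgeSet, hES]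
      right
      rfl
    -- reachability helpers
    have hadj' : ∀ (t : ℕ) (ht : t + 1 < m + 1), t ≠ (j:ℕ) →
        (F (j,a,b)).Adj (σ ⟨t, by omega⟩) (σ ⟨t+1, ht⟩) := by
      intro t ht htj
      have hk : ((⟨t, by omega⟩ : Fin m)).castSucc = (⟨t, by omega⟩ : Fin (m+1)) := by
        ext; simp
      have hk2 : ((⟨t, by omega⟩ : Fin m)).succ = (⟨t+1, ht⟩ : Fin (m+1)) := by
        ext; simp
      have := hadjP ⟨t, by omega⟩ (fun hc => htj (congrArg Fin.val hc))
      rwa [hk, hk2] at this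
    have hcenter : ∀ x : Fin (m+1), (F (j,a,b)).Reachable (σ x) (σ ⟨(j:ℕ), by omega⟩) := by
      intro x
      have hxlt := x.isLt
      by_cases hx : (x:ℕ) ≤ (j:ℕ)
      · have := seg_reach σ (j:ℕ) (by omega) (x:ℕ) hx
          (fun t ht1 ht2 => hadj' t (by omega) (by omega))
        simpa using this
      · -- right segment: x reaches m, b reaches m, b adj a, a ≤ j
        have hxm := seg_reach σ m (by omega) (x:ℕ) (by omega)
          (fun t ht1 ht2 => hadj' t (by omega) (by omega))
        have hbm := seg_reach σ m (by omega) (b:ℕ) (by omega)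
          (fun t ht1 ht2 => hadj' t (by omega) (by omega))
        have haj := seg_reach σ (j:ℕ) (by omega) (a:ℕ) h1
          (fun t ht1 ht2 => hadj' t (by omega) (by omega))
        have hxb : (F (j,a,b)).Reachable (σ x) (σ b) := by
          have := hxm.trans hbm.symm
          simpa using this
        refine (hxb.trans hadjf.symm.reachable).trans ?_
        simpa using haj
    have hconn : (F (j,a,b)).Connected := by
      rw [connected_iff]
      refine ⟨fun u v => ?_, inferInstance⟩
      have hu := hcenter (σ.symm u)
      have hv := hcenter (σ.symm v)
      rw [σ.apply_symm_apply] at hu hv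
      exact hu.trans hv.symm
    -- edge count
    have hcard : (F (j,a,b)).edgeSet.ncard + 1 = Fintype.card (Fin (m+1)) := by
      rw [hES, Fintype.card_fin]
      have hr : (Set.range (pe σ)).ncard = m := by rw [← hrange, hEcard]
      have hmem : pe σ j ∈ Set.range (pe σ) := ⟨j, rfl⟩
      have hd : (Set.range (pe σ) \ {pe σ j}).ncard = m - 1 := by
        rw [Set.ncard_diff_singleton_of_mem hmem, hr]
      have hdisj : Disjoint (Set.range (pe σ) \ {pe σ j}) {s(σ a, σ b)} := by
        rw [Set.disjoint_singleton_right]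
        intro hc
        exact hfnotin j a b h1 h2 h3 hc.1
      rw [Set.ncard_union_eq hdisj (Set.toFinite _) (Set.toFinite _), hd,
        Set.ncard_singleton]
      omega
    exact isTree_of_connected_of_ncard hconn hcard
  have hdistF : ∀ x ∈ tset m, (m + 1 - 1) - (T.edgeSet ∩ (F x).edgeSet).ncard ≤ 1 := by
    rintro ⟨j, a, b⟩ hx
    simp only [tset, Finset.mem_filter, Finset.mem_univ, true_and] at hx
    obtain ⟨h1, h2, h3⟩ := hx
    replace h1 : (a:ℕ) ≤ (j:ℕ) := h1
    replace h2 : (j:ℕ) < (b:ℕ) := h2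
    replace h3 : ¬((a:ℕ) = (j:ℕ) ∧ (b:ℕ) = (j:ℕ)+1) := h3
    have hj := j.isLt
    have hES := hFedge (j, a, b) (lt_of_le_of_lt h1 h2)
    have hinter : T.edgeSet ∩ (F (j,a,b)).edgeSet = Set.range (pe σ) \ {pe σ j} := by
      rw [hES, hrange]
      ext e
      constructor
      · rintro ⟨he1, ⟨he2, he3⟩ | he2⟩
        · exact ⟨he1, he3⟩
        · exfalso
          rw [Set.mem_singleton_iff] at he2
          subst he2
          exact hfnotin j a b h1 h2 h3 he1
      · rintro ⟨he1, he2⟩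
        exact ⟨he1, Or.inl ⟨he1, he2⟩⟩
    rw [hinter]
    have hmem : pe σ j ∈ Set.range (pe σ) := ⟨j, rfl⟩
    have hr : (Set.range (pe σ)).ncard = m := by rw [← hrange, hEcard]
    rw [Set.ncard_diff_singleton_of_mem hmem, hr]
    omega
  -- the set equality
  have hSeq : {T' : SimpleGraph (Fin (m+1)) | T'.IsTree ∧
      (m + 1 - 1) - (T.edgeSet ∩ T'.edgeSet).ncard ≤ 1}
      = insert T (F '' (tset m : Set (Fin m × Fin (m+1) × Fin (m+1)))) := by
    ext T'
    simp only [Set.mem_setOf_eq, Set.mem_insert_iff, Set.mem_image, Finset.mem_coe]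
    constructor
    · rintro ⟨hT', hd⟩
      have hT'card : T'.edgeSet.ncard = m := ncard_edgeSet_tree hT'
      have hsub : T.edgeSet ∩ T'.edgeSet ⊆ T.edgeSet := Set.inter_subset_left
      have hle : (T.edgeSet ∩ T'.edgeSet).ncard ≤ m :=
        le_trans (Set.ncard_le_ncard hsub (Set.toFinite _)) (le_of_eq hEcard)
      by_cases hcase : (T.edgeSet ∩ T'.edgeSet).ncard = m
      · left
        have ha1 : T.edgeSet ∩ T'.edgeSet = T.edgeSet :=
          Set.eq_of_subset_of_ncard_le hsub (by rw [hEcard, hcase]) (Set.toFinite _)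
        have ha2 : T.edgeSet ∩ T'.edgeSet = T'.edgeSet :=
          Set.eq_of_subset_of_ncard_le Set.inter_subset_right (by rw [hT'card, hcase])
            (Set.toFinite _)
        exact (edgeSet_inj.mp (ha1.symm.trans ha2)).symm
      · right
        have hm : (T.edgeSet ∩ T'.edgeSet).ncard + 1 = m := by omega
        have hdiff1 : (T.edgeSet \ T'.edgeSet).ncard = 1 := by
          have hd1 := Set.ncard_diff
            (Set.inter_subset_left : T.edgeSet ∩ T'.edgeSet ⊆ T.edgeSet) (Set.toFinite _)
          rw [Set.diff_self_inter] at hd1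
          rw [hd1, hEcard]
          omega
        have hdiff2 : (T'.edgeSet \ T.edgeSet).ncard = 1 := by
          have hd1 := Set.ncard_diff
            (Set.inter_subset_left : T'.edgeSet ∩ T.edgeSet ⊆ T'.edgeSet) (Set.toFinite _)
          rw [Set.diff_self_inter] at hd1
          rw [hd1, hT'card, Set.inter_comm]
          omega
        obtain ⟨e₀, he₀⟩ := Set.ncard_eq_one.mp hdiff1
        obtain ⟨f₀, hf₀⟩ := Set.ncard_eq_one.mp hdiff2
        have he₀mem : e₀ ∈ T.edgeSet \ T'.edgeSet := by rw [he₀]; rfl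
        have hf₀mem : f₀ ∈ T'.edgeSet \ T.edgeSet := by rw [hf₀]; rfl
        obtain ⟨j, hj⟩ : e₀ ∈ Set.range (pe σ) := by
          rw [← hrange]; exact he₀mem.1
        -- representation of f₀
        obtain ⟨u, v, hfuv⟩ : ∃ u v, f₀ = s(u, v) :=
          Sym2.ind (fun u v => ⟨u, v, rfl⟩) f₀
        have huv : T'.Adj u v := by
          rw [← SimpleGraph.mem_edgeSet, ← hfuv]
          exact hf₀mem.1
        have hune : σ.symm u ≠ σ.symm v := fun hc => huv.ne (by
          have := congrArg σ hc
          simpa using this)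
        obtain ⟨a, b, hab, hfab⟩ : ∃ a b : Fin (m+1), (a:ℕ) < (b:ℕ) ∧ f₀ = s(σ a, σ b) := by
          rcases lt_or_gt_of_ne (fun hc => hune (Fin.ext hc) :
              ((σ.symm u : Fin (m+1)):ℕ) ≠ ((σ.symm v : Fin (m+1)):ℕ)) with h | h
          · exact ⟨σ.symm u, σ.symm v, h, by rw [hfuv]; simp⟩
          · exact ⟨σ.symm v, σ.symm u, h, by rw [hfuv]; simp [Sym2.eq_swap]⟩
        have hfnotmemE : f₀ ∉ Set.range (pe σ) := by
          rw [← hrange]; exact hf₀mem.2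
        have hE' : T'.edgeSet = (T.edgeSet \ {e₀}) ∪ {f₀} := by
          have hinter : T.edgeSet ∩ T'.edgeSet = T.edgeSet \ {e₀} := by
            rw [← he₀]
            ext x
            simp only [Set.mem_inter_iff, Set.mem_diff]
            tauto
          calc T'.edgeSet = T'.edgeSet ∩ T.edgeSet ∪ T'.edgeSet \ T.edgeSet :=
                (Set.inter_union_diff _ _).symm
            _ = (T.edgeSet \ {e₀}) ∪ {f₀} := by rw [Set.inter_comm, hinter, hf₀]
        have hjlt := j.isLt
        -- the cut condition
        have hcut : (a:ℕ) ≤ (j:ℕ) ∧ (j:ℕ) < (b:ℕ) := by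
          by_contra hno
          set A : Set (Fin (m+1)) := {w | ((σ.symm w : Fin (m+1)):ℕ) ≤ (j:ℕ)} with hA
          have hstep : ∀ x y, T'.Adj x y → x ∈ A → y ∈ A := by
            intro x y hxy hxA
            have hmemE' : s(x, y) ∈ T'.edgeSet := hxy
            rw [hE'] at hmemE'
            rcases hmemE' with ⟨hmem, hnote⟩ | hmem
            · rw [hrange] at hmem
              obtain ⟨k, hk⟩ := hmem
              have hkj : (k:ℕ) ≠ (j:ℕ) := by
                intro hc
                apply hnote
                rw [Set.mem_singleton_iff, ← hk, ← hj]
                congr 1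
                exact Fin.ext hc
              have hklt := k.isLt
              rw [pe, Sym2.eq_iff] at hk
              rcases hk with ⟨hk1, hk2⟩ | ⟨hk1, hk2⟩
              · rw [← hk2]
                rw [← hk1] at hxA
                simp only [hA, Set.mem_setOf_eq, Equiv.symm_apply_apply, Fin.coe_castSucc,
                  Fin.val_succ] at hxA ⊢
                omega
              · rw [← hk1]
                rw [← hk2] at hxA
                simp only [hA, Set.mem_setOf_eq, Equiv.symm_apply_apply, Fin.coe_castSucc,
                  Fin.val_succ] at hxA ⊢
                omega
            · rw [Set.mem_singleton_iff, hfab, Sym2.eq_iff] at hmem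
              rcases hmem with ⟨hk1, hk2⟩ | ⟨hk1, hk2⟩
              · rw [hk2]
                simp only [hA, Set.mem_setOf_eq, Equiv.symm_apply_apply]
                rw [hk1] at hxA
                simp only [hA, Set.mem_setOf_eq, Equiv.symm_apply_apply] at hxA
                omega
              · rw [hk2]
                simp only [hA, Set.mem_setOf_eq, Equiv.symm_apply_apply]
                rw [hk1] at hxA
                simp only [hA, Set.mem_setOf_eq, Equiv.symm_apply_apply] at hxA
                omega
          obtain ⟨w⟩ := hT'.isConnected.preconnected (σ ⟨(j:ℕ), by omega⟩)
            (σ ⟨(j:ℕ)+1, by omega⟩)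
          have hstart : σ ⟨(j:ℕ), by omega⟩ ∈ A := by
            simp [hA]
          have hend := walk_closed hstep w hstart
          simp only [hA, Set.mem_setOf_eq, Equiv.symm_apply_apply] at hend
          omega
        have hne2 : ¬((a:ℕ) = (j:ℕ) ∧ (b:ℕ) = (j:ℕ)+1) := by
          rintro ⟨hha, hhb⟩
          apply hfnotmemE
          rw [hfab, mem_range_pe_iff]
          omega
        refine ⟨(j, a, b), ?_, ?_⟩
        · simp only [tset, Finset.mem_filter, Finset.mem_univ, true_and]
          exact ⟨hcut.1, hcut.2, hne2⟩
        · rw [← edgeSet_inj, hFedge (j, a, b) (by exact lt_of_le_of_lt hcut.1 hcut.2), hE',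
            hrange, hj, hfab]
    · rintro (rfl | ⟨x, hx, rfl⟩)
      · refine ⟨hT, ?_⟩
        rw [Set.inter_self, hEcard]
        omega
      · exact ⟨htreeF x hx, hdistF x hx⟩
  -- injectivity of F on tset
  have hinjF : Set.InjOn F (tset m : Set (Fin m × Fin (m+1) × Fin (m+1))) := by
    rintro ⟨j, a, b⟩ hx ⟨j', a', b'⟩ hy hFeq
    simp only [Finset.mem_coe, tset, Finset.mem_filter, Finset.mem_univ, true_and] at hx hy
    obtain ⟨hx1, hx2, hx3⟩ := hx
    obtain ⟨hy1, hy2, hy3⟩ := hy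
    replace hx1 : (a:ℕ) ≤ (j:ℕ) := hx1
    replace hx2 : (j:ℕ) < (b:ℕ) := hx2
    replace hx3 : ¬((a:ℕ) = (j:ℕ) ∧ (b:ℕ) = (j:ℕ)+1) := hx3
    replace hy1 : (a':ℕ) ≤ (j':ℕ) := hy1
    replace hy2 : (j':ℕ) < (b':ℕ) := hy2
    replace hy3 : ¬((a':ℕ) = (j':ℕ) ∧ (b':ℕ) = (j':ℕ)+1) := hy3
    have hEx := hFedge (j, a, b) (lt_of_le_of_lt hx1 hx2)
    have hEy := hFedge (j', a', b') (lt_of_le_of_lt hy1 hy2)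
    have hseteq : (Set.range (pe σ) \ {pe σ j}) ∪ {s(σ a, σ b)}
        = (Set.range (pe σ) \ {pe σ j'}) ∪ {s(σ a', σ b')} := by
      rw [← hEx, ← hEy, hFeq]
    have hfx : s(σ a, σ b) ∉ Set.range (pe σ) := hfnotin j a b hx1 hx2 hx3
    have hfy : s(σ a', σ b') ∉ Set.range (pe σ) := hfnotin j' a' b' hy1 hy2 hy3
    have hjj : j = j' := by
      have hnotin : pe σ j' ∉ (Set.range (pe σ) \ {pe σ j'}) ∪ {s(σ a', σ b')} := by
        rintro (⟨-, h2⟩ | h2)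
        · exact h2 rfl
        · rw [Set.mem_singleton_iff] at h2
          exact hfy ⟨j', h2⟩
      rw [← hseteq] at hnotin
      by_contra hne
      exact hnotin (Or.inl ⟨⟨j', rfl⟩, fun hc => hne (pe_inj σ hc).symm⟩)
    have hff : s(σ a, σ b) = s(σ a', σ b') := by
      have h1 : s(σ a, σ b) ∈ (Set.range (pe σ) \ {pe σ j'}) ∪ {s(σ a', σ b')} := by
        rw [← hseteq]
        right
        rfl
      rcases h1 with ⟨h2, -⟩ | h2
      · exact absurd h2 hfx
      · exact h2
    rw [Sym2.eq_iff] at hff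
    rcases hff with ⟨h1, h2⟩ | ⟨h1, h2⟩
    · have e1 := σ.injective h1
      have e2 := σ.injective h2
      rw [hjj, e1, e2]
    · have e1 := congrArg Fin.val (σ.injective h1)
      have e2 := congrArg Fin.val (σ.injective h2)
      omega
  -- T is not among the F x
  have hTnotin : T ∉ F '' (tset m : Set (Fin m × Fin (m+1) × Fin (m+1))) := by
    rintro ⟨⟨j, a, b⟩, hx, hFx⟩
    simp only [Finset.mem_coe, tset, Finset.mem_filter, Finset.mem_univ, true_and] at hx
    obtain ⟨h1, h2, h3⟩ := hx
    replace h1 : (a:ℕ) ≤ (j:ℕ) := h1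
    replace h2 : (j:ℕ) < (b:ℕ) := h2
    replace h3 : ¬((a:ℕ) = (j:ℕ) ∧ (b:ℕ) = (j:ℕ)+1) := h3
    have hpe : pe σ j ∈ T.edgeSet := by
      rw [hrange]; exact ⟨j, rfl⟩
    rw [← hFx, hFedge (j, a, b) (lt_of_le_of_lt h1 h2)] at hpe
    rcases hpe with ⟨-, hne⟩ | hpe
    · exact hne rfl
    · rw [Set.mem_singleton_iff] at hpe
      exact hfnotin j a b h1 h2 h3 (hpe ▸ ⟨j, rfl⟩)
  rw [hSeq, Set.ncard_insert_of_notMem hTnotin (Set.toFinite _),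
    Set.ncard_image_of_injOn hinjF, Set.ncard_coe_finset, tset_card, sum_main]
  have e1 : m + 1 - 1 = m := by omega
  have e2 : m + 1 - 2 = m - 1 := by omega
  have e3 : m + 1 + 3 = m + 4 := by omega
  rw [e1, e2, e3]

end LineBallAux

/-- For a line (path) tree `T` on `n` vertices, the radius-1 ball around `T`
in tree distance has size `(n-1)(n-2)(n+3)/6 + 1`. -/
theorem line_ball_radius_one (n : ℕ) (T : SimpleGraph (Fin n)) (hT : T.IsTree)
    (hline : ∃ e : Fin n ≃ Fin n, ∀ u v, T.Adj u v ↔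
      ∃ (i : Fin n) (h : (i : ℕ) + 1 < n),
        (u = e i ∧ v = e ⟨(i : ℕ) + 1, h⟩) ∨ (v = e i ∧ u = e ⟨(i : ℕ) + 1, h⟩)) :
    {T' : SimpleGraph (Fin n) | T'.IsTree ∧
        (n - 1) - (T.edgeSet ∩ T'.edgeSet).ncard ≤ 1}.ncard
      = (n - 1) * (n - 2) * (n + 3) / 6 + 1 := by
  cases n with
  | zero =>
    obtain ⟨x⟩ := hT.1.nonempty
    exact x.elim0
  | succ m =>
    obtain ⟨σ, hσ⟩ := hline
    exact LineBallAux.main m T hT σ hσ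
end

section
/- For any tree T on n vertices, the size of its radius-1 ball in tree distance equals 1 + ∑_{e ∈ E(T)} (a_e · b_e − 1), where for each edge e of T, a_e and b_e are the sizes of the two components obtained by deleting e from T. In particular V_T(n,1) = ∑ (i(n−i) − 1) + 1 over the component-size profiles (i, n−i) of single-edge deletions. -/
open SimpleGraph Set

section
variable {n : ℕ} {T : SimpleGraph (Fin n)} {u v : Fin n}

private lemma reach_of_adj_imp {V : Type*} {H G : SimpleGraph V}
    (h : ∀ a b, H.Adj a b → G.Reachable a b) {a b : V} (hr : H.Reachable a b) :
    G.Reachable a b := by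
  obtain ⟨p⟩ := hr
  induction p with
  | nil => exact Reachable.refl _
  | cons ha _ ih => exact (h _ _ ha).trans ih

private lemma reach_or_aux {V : Type*} {T : SimpleGraph V} {u v w z : V} (p : T.Walk w z)
    (hz : (T.deleteEdges {s(u,v)}).Reachable z u ∨ (T.deleteEdges {s(u,v)}).Reachable z v) :
    (T.deleteEdges {s(u,v)}).Reachable w u ∨ (T.deleteEdges {s(u,v)}).Reachable w v := by
  induction p with
  | nil => exact hz
  | cons ha p ih =>
    rename_i a b _
    by_cases he : s(a, b) = s(u, v)
    · rw [Sym2.eq_iff] at he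
      rcases he with ⟨rfl, rfl⟩ | ⟨rfl, rfl⟩
      · exact Or.inl (Reachable.refl _)
      · exact Or.inr (Reachable.refl _)
    · have h2 : (T.deleteEdges {s(u,v)}).Adj a b := by
        rw [deleteEdges_adj]; exact ⟨ha, by simpa using he⟩
      exact (ih hz).imp h2.reachable.trans h2.reachable.trans

private lemma reach_or' {V : Type*} {T : SimpleGraph V} (hc : T.Connected) (u v w : V) :
    (T.deleteEdges {s(u,v)}).Reachable w u ∨ (T.deleteEdges {s(u,v)}).Reachable w v := by
  obtain ⟨p⟩ := hc w u
  exact reach_or_aux p (Or.inl (Reachable.refl _))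

private lemma not_reach (hT : T.IsTree) (huv : T.Adj u v) :
    ¬ (T.deleteEdges {s(u,v)}).Reachable u v :=
  ((isAcyclic_iff_forall_adj_isBridge.mp hT.2) huv)

private lemma edgeSet_union_singleton {V : Type*} (E : Set (Sym2 V)) (hE : ∀ g ∈ E, ¬ g.IsDiag)
    {f : Sym2 V} (hf : ¬ f.IsDiag) :
    (fromEdgeSet (E ∪ {f})).edgeSet = E ∪ {f} := by
  rw [edgeSet_fromEdgeSet, sdiff_eq_left, Set.disjoint_left]
  rintro g (hg | hg) hg2
  · exact (hE g hg) hg2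
  · rw [Set.mem_singleton_iff] at hg
    exact hf (hg ▸ hg2)

private lemma replaced_isTree (hT : T.IsTree) (huv : T.Adj u v) {x y : Fin n}
    (hx : (T.deleteEdges {s(u,v)}).Reachable x u) (hy : (T.deleteEdges {s(u,v)}).Reachable y v) :
    (fromEdgeSet ((T.edgeSet \ {s(u,v)}) ∪ {s(x,y)})).IsTree := by
  set G := T.deleteEdges {s(u,v)} with hG
  set H := fromEdgeSet ((T.edgeSet \ {s(u,v)}) ∪ {s(x,y)}) with hH
  have hxy : x ≠ y := by
    rintro rfl
    exact not_reach hT huv (hx.symm.trans hy)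
  have hEdiag : ∀ g ∈ T.edgeSet \ {s(u,v)}, ¬ g.IsDiag :=
    fun g hg => T.not_isDiag_of_mem_edgeSet hg.1
  have hHE : H.edgeSet = (T.edgeSet \ {s(u,v)}) ∪ {s(x,y)} :=
    edgeSet_union_singleton _ hEdiag (by rw [Sym2.isDiag_iff_proj_eq]; exact hxy)
  have hGH : G ≤ H := by
    rw [← edgeSet_subset_edgeSet, hHE, hG, edgeSet_deleteEdges]
    exact Set.subset_union_left
  have hadj : H.Adj x y := by
    rw [← mem_edgeSet, hHE]
    exact Or.inr rfl
  have hreach : ∀ w, H.Reachable w x := by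
    intro w
    rcases reach_or' hT.1 u v w with h | h
    · exact (h.mono hGH).trans (hx.symm.mono hGH)
    · exact ((h.mono hGH).trans (hy.symm.mono hGH)).trans hadj.symm.reachable
  constructor
  · have hne : Nonempty (Fin n) := hT.1.nonempty
    exact Connected.mk fun a b => (hreach a).trans (hreach b).symm
  · intro w c hc
    by_cases hf : s(x,y) ∈ c.edges
    · have hr : (H \ fromEdgeSet {s(x,y)}).Reachable x y :=
        (adj_and_reachable_delete_edges_iff_exists_cycle.mpr ⟨w, c, hc, hf⟩).2
      have hle : (H \ fromEdgeSet {s(x,y)}) ≤ G := by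
        rw [← edgeSet_subset_edgeSet, edgeSet_sdiff, hHE, hG, edgeSet_deleteEdges]
        rintro g ⟨hg1, hg2⟩
        rcases hg1 with hg1 | hg1
        · exact hg1
        · exfalso
          apply hg2
          rw [edgeSet_fromEdgeSet]
          refine ⟨hg1, ?_⟩
          rw [Set.mem_singleton_iff] at hg1
          subst hg1
          rw [Sym2.mem_diagSet, Sym2.isDiag_iff_proj_eq]
          exact hxy
      exact absurd (hx.symm.trans ((hr.mono hle).trans hy)) (not_reach hT huv)
    · have hsub : ∀ g ∈ c.edges, g ∈ T.edgeSet := by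
        intro g hg
        have := c.edges_subset_edgeSet hg
        rw [hHE] at this
        rcases this with h | h
        · exact h.1
        · exact absurd (h ▸ hg) hf
      exact hT.2 (c.transfer T hsub) (hc.transfer hsub)
end

section
variable {n : ℕ} {T : SimpleGraph (Fin n)} {u v : Fin n}

private lemma comp_ne (hT : T.IsTree) (huv : T.Adj u v) :
    (T.deleteEdges {s(u,v)}).connectedComponentMk u ≠
      (T.deleteEdges {s(u,v)}).connectedComponentMk v := by
  intro h
  exact not_reach hT huv (ConnectedComponent.exact h)

private lemma univ_comps (hT : T.IsTree) :
    (Set.univ : Set (T.deleteEdges {s(u,v)}).ConnectedComponent) =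
      {(T.deleteEdges {s(u,v)}).connectedComponentMk u,
       (T.deleteEdges {s(u,v)}).connectedComponentMk v} := by
  ext c
  simp only [Set.mem_univ, true_iff, Set.mem_insert_iff, Set.mem_singleton_iff]
  obtain ⟨w, rfl⟩ := c.exists_rep
  rcases reach_or' hT.1 u v w with h | h
  · exact Or.inl (ConnectedComponent.sound h)
  · exact Or.inr (ConnectedComponent.sound h)

private lemma prod_comps (hT : T.IsTree) (huv : T.Adj u v) :
    ∏ᶠ c : (T.deleteEdges {s(u,v)}).ConnectedComponent, c.supp.ncard =
      ((T.deleteEdges {s(u,v)}).connectedComponentMk u).supp.ncard *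
      ((T.deleteEdges {s(u,v)}).connectedComponentMk v).supp.ncard := by
  rw [← finprod_mem_univ, univ_comps hT, finprod_mem_pair (comp_ne hT huv)]

private lemma edge_count (hT : T.IsTree) : T.edgeSet.ncard = n - 1 := by
  classical
  have h := hT.card_edgeFinset
  rw [Fintype.card_fin] at h
  rw [← coe_edgeFinset, Set.ncard_coe_finset]
  omega

private lemma per_edge (hT : T.IsTree) (huv : T.Adj u v) :
    {T' : SimpleGraph (Fin n) | T'.IsTree ∧
        T.edgeSet ∩ T'.edgeSet = T.edgeSet \ {s(u,v)}}.ncard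
      = (∏ᶠ c : (T.deleteEdges {s(u,v)}).ConnectedComponent, c.supp.ncard) - 1 := by
  classical
  set G := T.deleteEdges {s(u,v)} with hG
  set A := (G.connectedComponentMk u).supp with hA
  set B := (G.connectedComponentMk v).supp with hB
  have hmemA : ∀ {w}, w ∈ A ↔ G.connectedComponentMk w = G.connectedComponentMk u :=
    fun {w} => ConnectedComponent.mem_supp_iff _ _
  have hmemB : ∀ {w}, w ∈ B ↔ G.connectedComponentMk w = G.connectedComponentMk v :=
    fun {w} => ConnectedComponent.mem_supp_iff _ _
  have hne := comp_ne hT huv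
  -- facts about cross
  set cross : Set (Sym2 (Fin n)) := (Sym2.mk.uncurry : Fin n × Fin n → Sym2 (Fin n)) '' (A ×ˢ B) with hcross
  have hcross_ne_diag : ∀ {x y : Fin n}, x ∈ A → y ∈ B → x ≠ y := by
    rintro x y hx hy rfl
    exact hne ((hmemA.mp hx).symm.trans (hmemB.mp hy))
  have hcross_not_mem_E : ∀ {x y : Fin n}, x ∈ A → y ∈ B → s(x,y) ≠ s(u,v) →
      s(x,y) ∉ T.edgeSet := by
    intro x y hx hy hne' hmem
    have hadj : G.Adj x y := by
      rw [hG, deleteEdges_adj]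
      exact ⟨hmem, by simpa using hne'⟩
    exact hne ((hmemA.mp hx).symm.trans
      ((ConnectedComponent.sound hadj.reachable).trans (hmemB.mp hy)))
  -- Step 1 : the set equals an image
  have hSimg : {T' : SimpleGraph (Fin n) | T'.IsTree ∧
        T.edgeSet ∩ T'.edgeSet = T.edgeSet \ {s(u,v)}}
      = (fun f => fromEdgeSet ((T.edgeSet \ {s(u,v)}) ∪ {f})) '' (cross \ {s(u,v)}) := by
    apply Set.Subset.antisymm
    · rintro T' ⟨hT', hcap⟩
      have heE : s(u,v) ∈ T.edgeSet := huv
      have hcardT : T.edgeSet.ncard = n - 1 := edge_count hT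
      have hcardT' : T'.edgeSet.ncard = n - 1 := edge_count hT'
      have hn1 : 1 ≤ n - 1 := by
        have : 0 < T.edgeSet.ncard := by
          rw [Set.ncard_pos]
          exact ⟨_, heE⟩
        omega
      have hsub : T.edgeSet \ {s(u,v)} ⊆ T'.edgeSet := hcap ▸ Set.inter_subset_right
      have hdcard : (T'.edgeSet \ (T.edgeSet \ {s(u,v)})).ncard = 1 := by
        rw [Set.ncard_diff hsub, Set.ncard_diff_singleton_of_mem heE, hcardT, hcardT']
        omega
      obtain ⟨f, hf⟩ := Set.ncard_eq_one.mp hdcard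
      have hfmem : f ∈ T'.edgeSet \ (T.edgeSet \ {s(u,v)}) := hf ▸ rfl
      have hE' : T'.edgeSet = (T.edgeSet \ {s(u,v)}) ∪ {f} := by
        rw [← hf, Set.union_diff_cancel hsub]
      have hfE : f ∉ T.edgeSet := by
        intro h
        have h2 : f ∈ T.edgeSet ∩ T'.edgeSet := ⟨h, hfmem.1⟩
        rw [hcap] at h2
        exact hfmem.2 h2
      have hfne : f ≠ s(u,v) := fun h => hfE (h ▸ heE)
      clear hf hfmem hdcard
      revert hE' hfE hfne
      induction f using Sym2.ind with
      | _ x y =>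
        intro hE' hfE hfne
        have hfE'' : s(x,y) ∈ T'.edgeSet := by
          rw [hE']; exact Or.inr rfl
        have hxy : x ≠ y := by
          intro h
          exact T'.not_isDiag_of_mem_edgeSet hfE''
            (by rw [Sym2.isDiag_iff_proj_eq]; exact h)
        have hcases : ∀ w : Fin n, w ∈ A ∨ w ∈ B := by
          intro w
          rcases reach_or' hT.1 u v w with h | h
          · exact Or.inl (hmemA.mpr (ConnectedComponent.sound h))
          · exact Or.inr (hmemB.mpr (ConnectedComponent.sound h))
        have hmkne : G.connectedComponentMk x ≠ G.connectedComponentMk y := by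
          intro hmk
          have hadjreach : ∀ a b : Fin n, T'.Adj a b → G.Reachable a b := by
            intro a b hab
            have hab' : s(a,b) ∈ T'.edgeSet := hab
            rw [hE'] at hab'
            rcases hab' with h | h
            · have : s(a,b) ∈ G.edgeSet := by
                rw [hG, edgeSet_deleteEdges]; exact h
              exact (G.mem_edgeSet.mp this).reachable
            · rw [Set.mem_singleton_iff, Sym2.eq_iff] at h
              rcases h with ⟨rfl, rfl⟩ | ⟨rfl, rfl⟩
              · exact ConnectedComponent.exact hmk
              · exact (ConnectedComponent.exact hmk).symm
          exact not_reach hT huv (reach_of_adj_imp hadjreach (hT'.1 u v))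
        have hxyA : (x ∈ A ∧ y ∈ B) ∨ (y ∈ A ∧ x ∈ B) := by
          rcases hcases x with hx | hx <;> rcases hcases y with hy | hy
          · exact absurd ((hmemA.mp hx).trans (hmemA.mp hy).symm) hmkne
          · exact Or.inl ⟨hx, hy⟩
          · exact Or.inr ⟨hy, hx⟩
          · exact absurd ((hmemB.mp hx).trans (hmemB.mp hy).symm) hmkne
        have hgoal : ∀ x' y' : Fin n, x' ∈ A → y' ∈ B → s(x',y') = s(x,y) →
            T' ∈ (fun f => fromEdgeSet ((T.edgeSet \ {s(u,v)}) ∪ {f})) ''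
              (cross \ {s(u,v)}) := by
          intro x' y' hx' hy' hs
          refine ⟨s(x',y'), ⟨⟨(x', y'), ⟨hx', hy'⟩, rfl⟩, ?_⟩, ?_⟩
          · rw [Set.mem_singleton_iff, hs]; exact hfne
          · simp only
            rw [hs, ← hE', fromEdgeSet_edgeSet]
        rcases hxyA with ⟨hx, hy⟩ | ⟨hy, hx⟩
        · exact hgoal x y hx hy rfl
        · exact hgoal y x hy hx (Sym2.eq_swap)
    · rintro _ ⟨f, ⟨hfc, hfne⟩, rfl⟩
      rw [Set.mem_singleton_iff] at hfne
      obtain ⟨⟨x, y⟩, ⟨hx, hy⟩, rfl⟩ := hfc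
      have hxu : G.Reachable x u := ConnectedComponent.exact (hmemA.mp hx)
      have hyv : G.Reachable y v := ConnectedComponent.exact (hmemB.mp hy)
      refine ⟨replaced_isTree hT huv hxu hyv, ?_⟩
      have hHE := edgeSet_union_singleton (T.edgeSet \ {s(u,v)})
        (fun g hg => T.not_isDiag_of_mem_edgeSet hg.1)
        (f := s(x,y)) (by rw [Sym2.isDiag_iff_proj_eq]; exact hcross_ne_diag hx hy)
      simp only [Function.uncurry_apply_pair]
      rw [hHE, Set.inter_union_distrib_left,
        Set.inter_eq_self_of_subset_right Set.diff_subset,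
        Set.inter_singleton_eq_empty.mpr (hcross_not_mem_E hx hy hfne), Set.union_empty]
  -- Step 2 : compute the cardinality
  rw [hSimg]
  have hinj : Set.InjOn (fun f => fromEdgeSet ((T.edgeSet \ {s(u,v)}) ∪ {f}))
      (cross \ {s(u,v)}) := by
    rintro f1 ⟨hf1, hf1e⟩ f2 ⟨hf2, hf2e⟩ heq
    rw [Set.mem_singleton_iff] at hf1e hf2e
    obtain ⟨⟨x1, y1⟩, ⟨hx1, hy1⟩, rfl⟩ := hf1
    obtain ⟨⟨x2, y2⟩, ⟨hx2, hy2⟩, rfl⟩ := hf2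
    have h1 := edgeSet_union_singleton (T.edgeSet \ {s(u,v)})
      (fun g hg => T.not_isDiag_of_mem_edgeSet hg.1)
      (f := s(x1,y1)) (by rw [Sym2.isDiag_iff_proj_eq]; exact hcross_ne_diag hx1 hy1)
    have h2 := edgeSet_union_singleton (T.edgeSet \ {s(u,v)})
      (fun g hg => T.not_isDiag_of_mem_edgeSet hg.1)
      (f := s(x2,y2)) (by rw [Sym2.isDiag_iff_proj_eq]; exact hcross_ne_diag hx2 hy2)
    have he : (T.edgeSet \ {s(u,v)}) ∪ {s(x1,y1)} = (T.edgeSet \ {s(u,v)}) ∪ {s(x2,y2)} := by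
      rw [← h1, ← h2]
      exact congrArg SimpleGraph.edgeSet heq
    have hmem1 : s(x1,y1) ∈ (T.edgeSet \ {s(u,v)}) ∪ {s(x2,y2)} := by
      rw [← he]; exact Or.inr rfl
    rcases hmem1 with h | h
    · exact absurd h.1 (hcross_not_mem_E hx1 hy1 hf1e)
    · exact h
  rw [Set.ncard_image_of_injOn hinj]
  have hecross : s(u,v) ∈ cross :=
    ⟨(u, v), ⟨hmemA.mpr rfl, hmemB.mpr rfl⟩, rfl⟩
  rw [Set.ncard_diff_singleton_of_mem hecross]
  have hinj2 : Set.InjOn (Sym2.mk.uncurry : Fin n × Fin n → Sym2 (Fin n)) (A ×ˢ B) := by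
    rintro ⟨x1, y1⟩ ⟨hx1, hy1⟩ ⟨x2, y2⟩ ⟨hx2, hy2⟩ heq
    rw [Function.uncurry_apply_pair, Function.uncurry_apply_pair, Sym2.eq_iff] at heq
    rcases heq with ⟨rfl, rfl⟩ | ⟨rfl, rfl⟩
    · rfl
    · exact absurd ((hmemA.mp hx1).symm.trans (hmemB.mp hy2)) hne
  rw [hcross, Set.ncard_image_of_injOn hinj2, ← Nat.card_coe_set_eq,
    Nat.card_congr (Equiv.Set.prod A B), Nat.card_prod, Nat.card_coe_set_eq,
    Nat.card_coe_set_eq, prod_comps hT huv]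

end

private lemma ncard_finset_biUnion {α β : Type*} [Finite β] (s : Finset α) (f : α → Set β)
    (hdisj : ∀ a ∈ s, ∀ b ∈ s, a ≠ b → Disjoint (f a) (f b)) :
    (⋃ a ∈ s, f a).ncard = ∑ a ∈ s, (f a).ncard := by
  classical
  induction s using Finset.induction with
  | empty => simp
  | @insert a s hnot ih =>
    rw [Finset.set_biUnion_insert, Finset.sum_insert hnot,
      Set.ncard_union_eq ?_ (Set.toFinite _) (Set.toFinite _),
      ih (fun x hx y hy hxy => hdisj x (Finset.mem_insert_of_mem hx)
        y (Finset.mem_insert_of_mem hy) hxy)]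
    simp only [Set.disjoint_iUnion_right]
    intro b hb
    exact hdisj a (Finset.mem_insert_self a s) b (Finset.mem_insert_of_mem hb)
      (fun h => hnot (h ▸ hb))

/-- For any tree `T` on `n` vertices, the size of its radius-1 ball in tree
distance equals `1 + ∑_{e ∈ E(T)} (aₑ·bₑ - 1)`, where `aₑ, bₑ` are the sizes
of the two components of `T` with the edge `e` deleted (their product is the
product of the component sizes of `T.deleteEdges {e}`). -/
theorem ball_radius_one_formula (n : ℕ) (T : SimpleGraph (Fin n)) (hT : T.IsTree) :
    {T' : SimpleGraph (Fin n) | T'.IsTree ∧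
        (n - 1) - (T.edgeSet ∩ T'.edgeSet).ncard ≤ 1}.ncard
      = 1 + ∑ᶠ e ∈ T.edgeSet,
          ((∏ᶠ c : (T.deleteEdges {e}).ConnectedComponent, c.supp.ncard) - 1) := by
  classical
  set Se : Sym2 (Fin n) → Set (SimpleGraph (Fin n)) := fun e =>
    {T' : SimpleGraph (Fin n) | T'.IsTree ∧ T.edgeSet ∩ T'.edgeSet = T.edgeSet \ {e}}
    with hSe
  have hEcard : T.edgeSet.ncard = n - 1 := edge_count hT
  have key : {T' : SimpleGraph (Fin n) | T'.IsTree ∧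
        (n - 1) - (T.edgeSet ∩ T'.edgeSet).ncard ≤ 1}
      = insert T (⋃ e ∈ T.edgeFinset, Se e) := by
    ext T'
    simp only [Set.mem_setOf_eq, Set.mem_insert_iff, Set.mem_iUnion, hSe]
    constructor
    · rintro ⟨h1, h2⟩
      have hE'card : T'.edgeSet.ncard = n - 1 := edge_count h1
      by_cases hsub : T.edgeSet ⊆ T'.edgeSet
      · left
        exact (edgeSet_inj.mp (Set.eq_of_subset_of_ncard_le hsub (by omega))).symm
      · right
        obtain ⟨e, heT, heT'⟩ := Set.not_subset.mp hsub
        have hn1 : 1 ≤ n - 1 := by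
          have : 0 < T.edgeSet.ncard := (Set.ncard_pos (Set.toFinite _)).mpr ⟨e, heT⟩
          omega
        refine ⟨e, mem_edgeFinset.mpr heT, h1, ?_⟩
        have hsub2 : T.edgeSet ∩ T'.edgeSet ⊆ T.edgeSet \ {e} := by
          rintro g ⟨hg1, hg2⟩
          exact ⟨hg1, fun h => heT' (Set.mem_singleton_iff.mp h ▸ hg2)⟩
        have hle : (T.edgeSet ∩ T'.edgeSet).ncard ≤ (T.edgeSet \ {e}).ncard :=
          Set.ncard_le_ncard hsub2 (Set.toFinite _)
        refine (Set.eq_of_subset_of_ncard_le hsub2 ?_).symm ▸ rfl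
        rw [Set.ncard_diff_singleton_of_mem heT, hEcard] at hle ⊢
        omega
    · rintro (rfl | ⟨e, he, h1, h2⟩)
      · refine ⟨hT, ?_⟩
        rw [Set.inter_self, hEcard]
        omega
      · refine ⟨h1, ?_⟩
        rw [h2, Set.ncard_diff_singleton_of_mem (mem_edgeFinset.mp he), hEcard]
        omega
  rw [key]
  have hTnot : T ∉ ⋃ e ∈ T.edgeFinset, Se e := by
    simp only [Set.mem_iUnion, hSe, Set.mem_setOf_eq, not_exists]
    rintro e he ⟨-, hcap⟩
    rw [Set.inter_self] at hcap
    exact (hcap ▸ mem_edgeFinset.mp he : e ∈ T.edgeSet \ {e}).2 rfl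
  rw [Set.ncard_insert_of_notMem hTnot]
  have hdisj : ∀ a ∈ T.edgeFinset, ∀ b ∈ T.edgeFinset, a ≠ b → Disjoint (Se a) (Se b) := by
    intro a ha b hb hab
    rw [Set.disjoint_left]
    rintro T' ⟨-, hcapa⟩ ⟨-, hcapb⟩
    have heq : T.edgeSet \ {a} = T.edgeSet \ {b} := by rw [← hcapa, hcapb]
    have hmem : a ∈ T.edgeSet \ {b} :=
      ⟨mem_edgeFinset.mp ha, fun h => hab (Set.mem_singleton_iff.mp h)⟩
    rw [← heq] at hmem
    exact hmem.2 rfl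
  rw [ncard_finset_biUnion _ _ hdisj, add_comm]
  congr 1
  rw [← coe_edgeFinset, finsum_mem_coe_finset]
  apply Finset.sum_congr rfl
  intro e he
  have heE : e ∈ T.edgeSet := mem_edgeFinset.mp he
  revert heE
  induction e using Sym2.ind with
  | _ u v =>
    intro heE
    exact per_edge hT (T.mem_edgeSet.mp heE)
end

section
/- For every tree T on n vertices, the size of the radius-1 ball around T in tree distance satisfies (n-1)(n-2) + 1 ≤ V_T(n,1) ≤ (n-1)(n-2)(n+3)/6 + 1; i.e., the star minimizes and the line maximizes the radius-1 ball size. -/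
open Finset SimpleGraph

attribute [local instance] Classical.propDecidable

variable {V : Type*}

private lemma layer_sum {α : Type*} (A : Finset α) (f : α → ℕ) (M : ℕ)
    (hf : ∀ a ∈ A, f a ≤ M) :
    ∑ a ∈ A, f a = ∑ i ∈ Finset.Icc 1 M, (A.filter fun a => i ≤ f a).card := by
  simp_rw [Finset.card_filter]
  rw [Finset.sum_comm]
  refine Finset.sum_congr rfl fun a ha => ?_
  rw [← Finset.sum_filter]
  have h1 : (Finset.Icc 1 M).filter (fun i => i ≤ f a) = Finset.Icc 1 (f a) := by
    ext i
    simp only [Finset.mem_filter, Finset.mem_Icc]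
    have := hf a ha
    omega
  simp [h1]

private lemma gauss_sum (N : ℕ) : 2 * ∑ i ∈ Finset.Icc 1 (N - 1), (N - i) = N * (N - 1) := by
  induction N with
  | zero => simp
  | succ N ih =>
    cases N with
    | zero => simp
    | succ K =>
      have h1 : (K + 2) - 1 = K + 1 := rfl
      rw [h1, Finset.sum_Icc_succ_top (by omega : 1 ≤ K + 1)]
      have h2 : ∑ i ∈ Finset.Icc 1 K, (K + 2 - i)
          = (∑ i ∈ Finset.Icc 1 K, (K + 1 - i)) + K := by
        have : ∑ i ∈ Finset.Icc 1 K, (K + 2 - i)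
            = ∑ i ∈ Finset.Icc 1 K, ((K + 1 - i) + 1) := by
          refine Finset.sum_congr rfl fun i hi => ?_
          simp only [Finset.mem_Icc] at hi
          omega
        rw [this, Finset.sum_add_distrib]
        simp [Nat.card_Icc]
      have h3 : K + 1 - 1 = K := rfl
      rw [h3] at ih
      have h4 : K + 2 - (K + 1) = 1 := by omega
      rw [h2, h4]
      nlinarith [ih]

private lemma exists_edge_end {G : SimpleGraph V} :
    ∀ {a b : V} (p : G.Walk a b), a ≠ b → ∃ c, G.Adj c b ∧ s(c, b) ∈ p.edges := by
  intro a b p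
  induction p with
  | nil => intro h; exact absurd rfl h
  | @cons u v w h q ih =>
    intro _
    by_cases hvw : v = w
    · subst hvw
      exact ⟨u, h, by simp⟩
    · obtain ⟨c, hc, hce⟩ := ih hvw
      exact ⟨c, hc, by simp [hce]⟩

private lemma exists_edge_start {G : SimpleGraph V} :
    ∀ {a b : V} (p : G.Walk a b), a ≠ b → ∃ c, G.Adj a c ∧ s(a, c) ∈ p.edges := by
  intro a b p
  cases p with
  | nil => intro h; exact absurd rfl h
  | cons h q => exact fun _ => ⟨_, h, by simp⟩

private lemma leaf_not_mem_support {G : SimpleGraph V} {v v' : V}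
    (hdeg : ∀ x, G.Adj v x → x = v') {u w : V} (hu : u ≠ v) (hw : w ≠ v)
    {p : G.Walk u w} (hp : p.IsPath) : v ∉ p.support := by
  intro hv
  have ht := p.take_spec hv
  obtain ⟨c, hc, hce⟩ := exists_edge_end (p.takeUntil v hv) hu
  obtain ⟨d, hd, hde⟩ := exists_edge_start (p.dropUntil v hv) (Ne.symm hw)
  have hc' : c = v' := hdeg c hc.symm
  have hd' : d = v' := hdeg d hd
  subst hc' hd'
  have hnodup : (p.takeUntil v hv).edges.Disjoint (p.dropUntil v hv).edges := by
    apply List.disjoint_of_nodup_append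
    rw [← SimpleGraph.Walk.edges_append, ht]
    exact hp.edges_nodup
  rw [Sym2.eq_swap] at hce
  exact hnodup hce hde

private lemma exists_adj_dist {G : SimpleGraph V} {u w : V} (h : G.dist u w ≠ 0) :
    ∃ y, G.Adj u y ∧ G.dist y w = G.dist u w - 1 := by
  obtain ⟨p, hp⟩ := SimpleGraph.exists_walk_of_dist_ne_zero h
  cases p with
  | nil => rw [SimpleGraph.Walk.length_nil] at hp; exact absurd hp.symm h
  | @cons u y w hadj q =>
    refine ⟨y, hadj, le_antisymm ?_ ?_⟩
    · have h1 : G.dist y w ≤ q.length := SimpleGraph.dist_le q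
      rw [SimpleGraph.Walk.length_cons] at hp
      omega
    · have hr : G.Reachable y w := ⟨q⟩
      obtain ⟨r, hr'⟩ := hr.exists_walk_length_eq_dist
      have h2 := SimpleGraph.dist_le (SimpleGraph.Walk.cons hadj r)
      rw [SimpleGraph.Walk.length_cons, hr'] at h2
      omega

private lemma aux_level_exists {G : SimpleGraph V} {w : V} :
    ∀ (k : ℕ) (u : V), G.dist u w = k → ∀ j, j ≤ k →
      ∃ x, G.dist x w = j ∧ (j ≠ 0 → ∃ y, G.Adj x y) := by
  intro k
  induction k with
  | zero =>
    intro u _ j hj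
    interval_cases j
    exact ⟨w, SimpleGraph.dist_self, fun h => absurd rfl h⟩
  | succ k ih =>
    intro u hu j hj
    have hne : G.dist u w ≠ 0 := by omega
    rcases Nat.eq_or_lt_of_le hj with rfl | hlt
    · refine ⟨u, hu, fun _ => ?_⟩
      obtain ⟨y, hy, _⟩ := exists_adj_dist hne
      exact ⟨y, hy⟩
    · obtain ⟨y, _, hy⟩ := exists_adj_dist hne
      exact ih y (by omega) j (by omega)

private lemma walk_support_subset {G : SimpleGraph V} {s : Finset V}
    (hsup : ∀ a b : V, G.Adj a b → a ∈ s) :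
    ∀ {a b : V} (p : G.Walk a b), b ∈ s → ∀ x ∈ p.support, x ∈ s := by
  intro a b p hb
  induction p with
  | nil => intro x hx; rw [SimpleGraph.Walk.support_nil, List.mem_singleton] at hx; rwa [hx]
  | @cons u v w h q ih =>
    intro x hx
    rw [SimpleGraph.Walk.support_cons, List.mem_cons] at hx
    rcases hx with rfl | hx
    · exact hsup _ _ h
    · exact ih hb x hx

private lemma sum_dist_le [Fintype V] {G : SimpleGraph V} {s : Finset V} {w : V}
    (hsup : ∀ a b : V, G.Adj a b → a ∈ s) (hreach : ∀ u ∈ s, G.Reachable u w)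
    (hw : w ∈ s) :
    2 * ∑ u ∈ s.erase w, G.dist u w ≤ s.card * (s.card - 1) := by
  set N := s.card with hN
  have hdb : ∀ u ∈ s.erase w, G.dist u w ≤ N - 1 := by
    intro u hu
    obtain ⟨p, hp, hl⟩ := (hreach u (Finset.mem_of_mem_erase hu)).exists_path_of_dist
    have hsub := walk_support_subset hsup p hw
    have hnd : p.support.Nodup := hp.support_nodup
    have h1 : p.support.toFinset.card = p.support.length := List.toFinset_card_of_nodup hnd
    have hle : p.support.toFinset ⊆ s := by
      intro x hx; rw [List.mem_toFinset] at hx; exact hsub x hx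
    have h2 := Finset.card_le_card hle
    have h3 := p.length_support
    omega
  have hlevel : ∀ i : ℕ, 1 ≤ i →
      ((s.erase w).filter fun u => i ≤ G.dist u w).card ≤ N - i := by
    intro i hi
    by_cases hne : ((s.erase w).filter fun u => i ≤ G.dist u w).Nonempty
    · obtain ⟨u₀, hu₀⟩ := hne
      have hu₀d : i ≤ G.dist u₀ w := (Finset.mem_filter.1 hu₀).2
      have hex : ∀ j : ℕ, ∃ x, 1 ≤ j → j ≤ i - 1 →
          G.dist x w = j ∧ x ∈ s.erase w ∧ G.dist x w < i := by
        intro j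
        by_cases hj : 1 ≤ j ∧ j ≤ i - 1
        · obtain ⟨x, hx, hadjx⟩ := aux_level_exists (G.dist u₀ w) u₀ rfl j (by omega)
          refine ⟨x, fun _ _ => ⟨hx, ?_, by omega⟩⟩
          obtain ⟨y, hy⟩ := hadjx (by omega)
          have hxs : x ∈ s := hsup x y hy
          have hxw : x ≠ w := by
            intro h; subst h; rw [SimpleGraph.dist_self] at hx; omega
          exact Finset.mem_erase.2 ⟨hxw, hxs⟩
        · exact ⟨w, fun h1 h2 => absurd ⟨h1, h2⟩ hj⟩
      choose f hf using hex
      have hinj : Set.InjOn f ↑(Finset.Icc 1 (i - 1)) := by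
        intro a ha b hb hab
        rw [Finset.coe_Icc, Set.mem_Icc] at ha hb
        have h1 := (hf a ha.1 ha.2).1
        have h2 := (hf b hb.1 hb.2).1
        rw [hab] at h1
        omega
      have hmaps : ∀ j ∈ Finset.Icc 1 (i - 1),
          f j ∈ (s.erase w).filter fun u => G.dist u w < i := by
        intro j hj
        rw [Finset.mem_Icc] at hj
        obtain ⟨_, h2, h3⟩ := hf j hj.1 hj.2
        exact Finset.mem_filter.2 ⟨h2, h3⟩
      have hcard1 := Finset.card_le_card_of_injOn f hmaps hinj
      rw [Nat.card_Icc] at hcard1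
      have hdisj : Disjoint ((s.erase w).filter fun u => i ≤ G.dist u w)
          ((s.erase w).filter fun u => G.dist u w < i) := by
        rw [Finset.disjoint_left]
        intro x h1 h2
        have := (Finset.mem_filter.1 h1).2
        have := (Finset.mem_filter.1 h2).2
        omega
      have hsubu : ((s.erase w).filter fun u => i ≤ G.dist u w) ∪
          ((s.erase w).filter fun u => G.dist u w < i) ⊆ s.erase w := by
        intro x hx
        rcases Finset.mem_union.1 hx with h | h
        · exact Finset.mem_of_mem_filter x h
        · exact Finset.mem_of_mem_filter x h
      have hcu := Finset.card_le_card hsubu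
      rw [Finset.card_union_of_disjoint hdisj] at hcu
      have hcee : (s.erase w).card = N - 1 := by rw [Finset.card_erase_of_mem hw]
      omega
    · rw [Finset.not_nonempty_iff_eq_empty] at hne
      simp [hne]
  rw [layer_sum (s.erase w) _ (N - 1) hdb]
  calc 2 * ∑ i ∈ Finset.Icc 1 (N - 1), ((s.erase w).filter fun u => i ≤ G.dist u w).card
      ≤ 2 * ∑ i ∈ Finset.Icc 1 (N - 1), (N - i) := by
        gcongr 2 * ?_
        apply Finset.sum_le_sum
        intro i hi
        exact hlevel i (Finset.mem_Icc.1 hi).1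
    _ = N * (N - 1) := gauss_sum N

private lemma key_wiener [Fintype V] :
    ∀ (m : ℕ) (G : SimpleGraph V) (s : Finset V), s.card ≤ m →
      (∀ a b : V, G.Adj a b → a ∈ s) →
      (∀ u ∈ s, ∀ v ∈ s, G.Reachable u v) →
      G.edgeSet.ncard + 1 = s.card →
      3 * ∑ q ∈ s.offDiag, G.dist q.1 q.2 ≤ (s.card - 1) * s.card * (s.card + 1) := by
  intro m
  induction m with
  | zero =>
    intro G s hm _ _ hcard
    omega
  | succ m ih =>
    intro G s hm hsup hreach hcard
    by_cases hsmall : s.card ≤ 1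
    · have hoff : s.offDiag = ∅ := by
        rw [Finset.eq_empty_iff_forall_notMem]
        intro q hq
        rw [Finset.mem_offDiag] at hq
        exact hq.2.2 (Finset.card_le_one.1 hsmall _ hq.1 _ hq.2.1)
      simp [hoff]
    · push_neg at hsmall
      have hN2 : 2 ≤ s.card := hsmall
      set N := s.card with hNdef
      -- edge count as finset
      have hEcard : G.edgeSet.ncard = G.edgeFinset.card := by
        rw [← SimpleGraph.coe_edgeFinset, Set.ncard_coe_finset]
      -- every vertex of s has positive degree
      have hdegpos : ∀ v ∈ s, 0 < G.degree v := by
        intro v hv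
        obtain ⟨u, hu, hne⟩ := Finset.exists_mem_ne hsmall v
        obtain ⟨p⟩ := hreach v hv u hu
        obtain ⟨c, hc, _⟩ := exists_edge_start p (Ne.symm hne)
        exact (G.degree_pos_iff_exists_adj v).2 ⟨c, hc⟩
      have hdeg0 : ∀ v, v ∉ s → G.degree v = 0 := by
        intro v hv
        by_contra h
        obtain ⟨c, hc⟩ := (G.degree_pos_iff_exists_adj v).1 (Nat.pos_of_ne_zero h)
        exact hv (hsup v c hc)
      -- leaf existence
      obtain ⟨v, hvs, hvdeg⟩ : ∃ v ∈ s, G.degree v = 1 := by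
        by_contra h
        push_neg at h
        have h2 : ∀ v ∈ s, 2 ≤ G.degree v := by
          intro v hv
          have := hdegpos v hv
          have := h v hv
          omega
        have hsum := G.sum_degrees_eq_twice_card_edges
        rw [← Finset.sum_add_sum_compl s] at hsum
        have hz : ∑ v ∈ sᶜ, G.degree v = 0 :=
          Finset.sum_eq_zero fun v hv => hdeg0 v (Finset.mem_compl.1 hv)
        have hges : 2 * N ≤ ∑ v ∈ s, G.degree v := by
          calc 2 * N = ∑ _v ∈ s, 2 := by rw [Finset.sum_const, smul_eq_mul, hNdef, mul_comm]
          _ ≤ ∑ v ∈ s, G.degree v := Finset.sum_le_sum h2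
        omega
      obtain ⟨v', hv'⟩ : ∃ v', G.neighborFinset v = {v'} := Finset.card_eq_one.1 hvdeg
      have huniq : ∀ x, G.Adj v x → x = v' := by
        intro x hx
        have : x ∈ G.neighborFinset v := (SimpleGraph.mem_neighborFinset _ _ _).2 hx
        rw [hv'] at this
        simpa using this
      have hadj : G.Adj v v' := by
        have : v' ∈ G.neighborFinset v := by rw [hv']; simp
        exact (SimpleGraph.mem_neighborFinset _ _ _).1 this
      have hv's : v' ∈ s := hsup v' v hadj.symm
      have hvv' : v' ≠ v := hadj.ne'
      set e : Sym2 V := s(v, v') with he_def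
      set G' := G.deleteEdges {e} with hG'def
      have hG'le : G' ≤ G := SimpleGraph.deleteEdges_le _
      have hA' : ∀ x y, G'.Adj x y → x ≠ v := by
        intro x y hxy hx
        rw [hG'def, SimpleGraph.deleteEdges_adj] at hxy
        apply hxy.2
        rw [hx] at hxy ⊢
        rw [huniq y hxy.1]
        rfl
      have hsup' : ∀ a b, G'.Adj a b → a ∈ s.erase v := fun a b h =>
        Finset.mem_erase.2 ⟨hA' a b h, hsup a b (hG'le h)⟩
      set s' := s.erase v with hs'def
      have htrans : ∀ u ∈ s', ∀ x ∈ s', G'.Reachable u x ∧ G'.dist u x = G.dist u x := by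
        intro u hu x hx
        have hu' := Finset.mem_erase.1 hu
        have hx' := Finset.mem_erase.1 hx
        obtain ⟨p, hp, hl⟩ := (hreach u hu'.2 x hx'.2).exists_path_of_dist
        have hvp : v ∉ p.support := leaf_not_mem_support huniq hu'.1 hx'.1 hp
        have hpe : ∀ f ∈ p.edges, f ∉ ({e} : Set (Sym2 V)) := by
          intro f hf hfe
          rw [Set.mem_singleton_iff] at hfe
          subst hfe
          exact hvp (SimpleGraph.Walk.fst_mem_support_of_mem_edges p hf)
        have hlenp : (p.toDeleteEdges {e} hpe).length = p.length := by
          conv_rhs => rw [← SimpleGraph.Walk.map_toDeleteEdges_eq {e} hpe]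
          rw [SimpleGraph.Walk.length_map]
        have hre : G'.Reachable u x := ⟨p.toDeleteEdges {e} hpe⟩
        refine ⟨hre, le_antisymm ?_ ?_⟩
        · have hd := SimpleGraph.dist_le (p.toDeleteEdges {e} hpe)
          rw [hlenp, hl] at hd
          exact hd
        · obtain ⟨q, hq⟩ := hre.exists_walk_length_eq_dist
          have hd := SimpleGraph.dist_le (q.mapLe hG'le)
          rw [SimpleGraph.Walk.mapLe, SimpleGraph.Walk.length_map, hq] at hd
          exact hd
      have he : e ∈ G.edgeSet := G.mem_edgeSet.2 hadj
      have hE' : G'.edgeSet = G.edgeSet \ {e} := SimpleGraph.edgeSet_deleteEdges _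
      have hcN : s'.card = N - 1 := Finset.card_erase_of_mem hvs
      have hcard' : G'.edgeSet.ncard + 1 = s'.card := by
        rw [hE', Set.ncard_diff_singleton_of_mem he, hcN]
        omega
      have hreach' : ∀ u ∈ s', ∀ x ∈ s', G'.Reachable u x := fun u hu x hx =>
        (htrans u hu x hx).1
      have hIH := ih G' s' (by omega) hsup' hreach' hcard'
      have hv'e : v' ∈ s' := Finset.mem_erase.2 ⟨hvv', hv's⟩
      have hSD := sum_dist_le (G := G') (s := s') (w := v') hsup'
        (fun u hu => hreach' u hu v' hv'e) hv'e
      -- decomposition of the offDiag sum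
      have hvnotin : v ∉ s' := Finset.notMem_erase v s
      have hoff : s.offDiag = s'.offDiag ∪ {v} ×ˢ s' ∪ s' ×ˢ {v} := by
        conv_lhs => rw [← Finset.insert_erase hvs]
        exact Finset.offDiag_insert hvnotin
      have d2 : Disjoint s'.offDiag ({v} ×ˢ s') := by
        rw [Finset.disjoint_left]
        intro q hq hq2
        rw [Finset.mem_offDiag] at hq
        rw [Finset.mem_product, Finset.mem_singleton] at hq2
        exact hvnotin (hq2.1 ▸ hq.1)
      have d1 : Disjoint (s'.offDiag ∪ {v} ×ˢ s') (s' ×ˢ {v}) := by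
        rw [Finset.disjoint_left]
        intro q hq hq2
        rw [Finset.mem_product, Finset.mem_singleton] at hq2
        rcases Finset.mem_union.1 hq with h | h
        · rw [Finset.mem_offDiag] at h
          exact hvnotin (hq2.2 ▸ h.2.1)
        · rw [Finset.mem_product] at h
          exact hvnotin (hq2.2 ▸ h.2)
      have hprod1 : ∑ q ∈ {v} ×ˢ s', G.dist q.1 q.2 = ∑ x ∈ s', G.dist v x := by
        rw [Finset.sum_product]
        simp
      have hprod2 : ∑ q ∈ s' ×ˢ {v}, G.dist q.1 q.2 = ∑ x ∈ s', G.dist x v := by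
        rw [Finset.sum_product]
        simp
      have hsum0 : ∑ q ∈ s.offDiag, G.dist q.1 q.2
          = ∑ q ∈ s'.offDiag, G.dist q.1 q.2
            + ∑ x ∈ s', G.dist v x + ∑ x ∈ s', G.dist x v := by
        rw [hoff, Finset.sum_union d1, Finset.sum_union d2, hprod1, hprod2]
      have hcomm : ∑ x ∈ s', G.dist v x = ∑ x ∈ s', G.dist x v :=
        Finset.sum_congr rfl fun x _ => SimpleGraph.dist_comm
      have hWs' : ∑ q ∈ s'.offDiag, G.dist q.1 q.2 = ∑ q ∈ s'.offDiag, G'.dist q.1 q.2 := by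
        refine Finset.sum_congr rfl fun q hq => ?_
        rw [Finset.mem_offDiag] at hq
        exact ((htrans q.1 hq.1 q.2 hq.2.1).2).symm
      have hbound : ∑ x ∈ s', G.dist x v ≤ (N - 1) + ∑ x ∈ s'.erase v', G'.dist x v' := by
        have hsplit : ∑ x ∈ s'.erase v', G.dist x v + G.dist v' v = ∑ x ∈ s', G.dist x v :=
          Finset.sum_erase_add s' _ hv'e
        have h1 : G.dist v' v = 1 := SimpleGraph.dist_eq_one_iff_adj.2 hadj.symm
        have h2 : ∀ x ∈ s'.erase v', G.dist x v ≤ G'.dist x v' + 1 := by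
          intro x hx
          have hx1 := Finset.mem_erase.1 hx
          have hxs : x ∈ s := (Finset.mem_erase.1 hx1.2).2
          obtain ⟨r, hr⟩ := (hreach x hxs v' hv's).exists_walk_length_eq_dist
          have hd := SimpleGraph.dist_le (r.concat hadj.symm)
          rw [SimpleGraph.Walk.length_concat, hr] at hd
          have htr := (htrans x hx1.2 v' hv'e).2
          omega
        have h3 : ∑ x ∈ s'.erase v', G.dist x v
            ≤ ∑ x ∈ s'.erase v', (G'.dist x v' + 1) := Finset.sum_le_sum h2
        rw [Finset.sum_add_distrib, Finset.sum_const, smul_eq_mul, mul_one] at h3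
        have hce : (s'.erase v').card = N - 2 := by
          rw [Finset.card_erase_of_mem hv'e, hcN]
          omega
        omega
      -- final arithmetic
      obtain ⟨K, hK⟩ : ∃ K, N = K + 2 := ⟨N - 2, by omega⟩
      rw [hcN] at hIH hSD
      have hIH' : 3 * ∑ q ∈ s'.offDiag, G'.dist q.1 q.2 ≤ K * (K + 1) * (K + 2) := by
        have e1 : N - 1 - 1 = K := by omega
        have e2 : N - 1 = K + 1 := by omega
        rw [e1, e2] at hIH
        calc 3 * ∑ q ∈ s'.offDiag, G'.dist q.1 q.2 ≤ K * (K + 1) * (K + 1 + 1) := hIH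
          _ = K * (K + 1) * (K + 2) := by ring
      have hSD' : 2 * ∑ x ∈ s'.erase v', G'.dist x v' ≤ (K + 1) * K := by
        have e2 : N - 1 = K + 1 := by omega
        rw [e2] at hSD
        calc 2 * ∑ x ∈ s'.erase v', G'.dist x v' ≤ (K + 1) * (K + 1 - 1) := hSD
          _ = (K + 1) * K := by norm_num
      have hfin : ∑ q ∈ s.offDiag, G.dist q.1 q.2
          ≤ ∑ q ∈ s'.offDiag, G'.dist q.1 q.2
            + 2 * ((K + 1) + ∑ x ∈ s'.erase v', G'.dist x v') := by
        rw [hsum0, hcomm, hWs']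
        have : N - 1 = K + 1 := by omega
        rw [this] at hbound
        omega
      have egoal : (N - 1) * N * (N + 1) = (K + 1) * (K + 2) * (K + 3) := by
        have h21 : K + 2 - 1 = K + 1 := by omega
        rw [hK, h21]
      rw [egoal]
      nlinarith [hIH', hSD', hfin]

private lemma sep_count [Fintype V] {T : SimpleGraph V} (hT : T.IsTree) {u v : V}
    (huv : u ≠ v) :
    (T.edgeFinset.filter fun e => ¬(T.deleteEdges {e}).Reachable u v).card = T.dist u v := by
  obtain ⟨p, hp, hl⟩ := (hT.isConnected.preconnected u v).exists_path_of_dist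
  have hfe : T.edgeFinset.filter (fun e => ¬(T.deleteEdges {e}).Reachable u v)
      = p.edges.toFinset := by
    ext f
    simp only [Finset.mem_filter, SimpleGraph.mem_edgeFinset, List.mem_toFinset]
    constructor
    · rintro ⟨hfE, hsep⟩
      by_contra hfp
      exact hsep ⟨p.toDeleteEdges {f} (fun g hg hgf => by
        rw [Set.mem_singleton_iff] at hgf; exact hfp (hgf ▸ hg))⟩
    · intro hfp
      refine ⟨p.edges_subset_edgeSet hfp, ?_⟩
      intro hreach
      obtain ⟨q0⟩ := hreach
      have hqsub : ∀ g ∈ q0.bypass.edges, g ∈ T.edgeSet := by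
        intro g hg
        have := q0.bypass.edges_subset_edgeSet hg
        rw [SimpleGraph.edgeSet_deleteEdges] at this
        exact this.1
      have hq'path : (q0.bypass.transfer T hqsub).IsPath :=
        (SimpleGraph.Walk.bypass_isPath q0).transfer hqsub
      have huniq := SimpleGraph.IsAcyclic.path_unique hT.2 ⟨p, hp⟩
        ⟨q0.bypass.transfer T hqsub, hq'path⟩
      have hpq : p = q0.bypass.transfer T hqsub := Subtype.ext_iff.mp huniq
      have hfq : f ∈ (q0.bypass.transfer T hqsub).edges := hpq ▸ hfp
      rw [SimpleGraph.Walk.edges_transfer] at hfq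
      have := q0.bypass.edges_subset_edgeSet hfq
      rw [SimpleGraph.edgeSet_deleteEdges] at this
      exact this.2 rfl
  rw [hfe, List.toFinset_card_of_nodup hp.edges_nodup, SimpleGraph.Walk.length_edges, hl]

private lemma card_sym2_double (O : Finset (V × V))
    (hsym : ∀ u v, (u, v) ∈ O → (v, u) ∈ O) (hdiag : ∀ u, (u, u) ∉ O) :
    O.card = 2 * (O.image fun q => s(q.1, q.2)).card := by
  rw [Finset.card_eq_sum_card_image (fun q => s(q.1, q.2)) O]
  have hfib : ∀ b ∈ O.image (fun q => s(q.1, q.2)),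
      (O.filter fun a => s(a.1, a.2) = b).card = 2 := by
    intro b hb
    obtain ⟨⟨u, v⟩, huv, rfl⟩ := Finset.mem_image.1 hb
    have huvne : u ≠ v := fun h => hdiag u (h ▸ huv)
    have hset : O.filter (fun a => s(a.1, a.2) = s(u, v)) = {(u, v), (v, u)} := by
      ext ⟨c, d⟩
      simp only [Finset.mem_filter, Finset.mem_insert, Finset.mem_singleton,
        Prod.mk.injEq, Sym2.eq_iff]
      constructor
      · rintro ⟨hab, (⟨rfl, rfl⟩ | ⟨rfl, rfl⟩)⟩
        · exact Or.inl ⟨rfl, rfl⟩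
        · exact Or.inr ⟨rfl, rfl⟩
      · rintro (⟨rfl, rfl⟩ | ⟨rfl, rfl⟩)
        · exact ⟨huv, Or.inl ⟨rfl, rfl⟩⟩
        · exact ⟨hsym _ _ huv, Or.inr ⟨rfl, rfl⟩⟩
    rw [hset, Finset.card_insert_of_notMem, Finset.card_singleton]
    rw [Finset.mem_singleton]
    intro hcontra
    rw [Prod.mk.injEq] at hcontra
    exact huvne hcontra.1
  rw [Finset.sum_congr rfl hfib, Finset.sum_const, smul_eq_mul, mul_comm]

private lemma reach_cover {T : SimpleGraph V} {x y : V} :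
    ∀ {a b : V} (_p : T.Walk a b), b = x →
      (T.deleteEdges {s(x, y)}).Reachable a x ∨ (T.deleteEdges {s(x, y)}).Reachable a y := by
  intro a b p
  induction p with
  | nil => rintro rfl; exact Or.inl (SimpleGraph.Reachable.refl _)
  | @cons u w x' h q ih =>
    intro hx
    by_cases he : s(u, w) = s(x, y)
    · rw [Sym2.eq_iff] at he
      rcases he with ⟨rfl, rfl⟩ | ⟨rfl, rfl⟩
      · exact Or.inl (SimpleGraph.Reachable.refl _)
      · exact Or.inr (SimpleGraph.Reachable.refl _)
    · have hadj' : (T.deleteEdges {s(x, y)}).Adj u w :=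
        SimpleGraph.deleteEdges_adj.2 ⟨h, by simpa using he⟩
      rcases ih hx with h1 | h1
      · exact Or.inl (hadj'.reachable.trans h1)
      · exact Or.inr (hadj'.reachable.trans h1)

private lemma tree_bridge {T : SimpleGraph V} (hT : T.IsTree) {x y : V} (h : T.Adj x y) :
    ¬(T.deleteEdges {s(x, y)}).Reachable x y := by
  have hb := SimpleGraph.isAcyclic_iff_forall_edge_isBridge.mp hT.2 (T.mem_edgeSet.2 h)
  rw [SimpleGraph.isBridge_iff] at hb
  exact hb

section Cross

variable [Fintype V]

private noncomputable def crossO (T : SimpleGraph V) (e : Sym2 V) : Finset (V × V) :=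
  Finset.univ.offDiag.filter fun q => ¬(T.deleteEdges {e}).Reachable q.1 q.2

private noncomputable def crossF (T : SimpleGraph V) (e : Sym2 V) : Finset (Sym2 V) :=
  (crossO T e).image fun q => s(q.1, q.2)

private lemma crossO_card {T : SimpleGraph V} (e : Sym2 V) :
    (crossO T e).card = 2 * (crossF T e).card := by
  apply card_sym2_double
  · intro u v huv
    rw [crossO, Finset.mem_filter, Finset.mem_offDiag] at huv ⊢
    exact ⟨⟨huv.1.2.1, huv.1.1, Ne.symm huv.1.2.2⟩,
      fun hr => huv.2 hr.symm⟩
  · intro u hu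
    rw [crossO, Finset.mem_filter, Finset.mem_offDiag] at hu
    exact hu.1.2.2 rfl

private lemma cross_spec {T : SimpleGraph V} {e p : Sym2 V} (hp : p ∈ crossF T e) :
    ∃ u v, p = s(u, v) ∧ u ≠ v ∧ ¬(T.deleteEdges {e}).Reachable u v := by
  obtain ⟨⟨u, v⟩, hq, h⟩ := Finset.mem_image.1 hp
  rw [crossO, Finset.mem_filter, Finset.mem_offDiag] at hq
  exact ⟨u, v, h.symm, hq.1.2.2, hq.2⟩

set_option maxHeartbeats 1000000 in
private lemma cross_sum {T : SimpleGraph V} (hT : T.IsTree) :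
    ∑ e ∈ T.edgeFinset, (crossO T e).card
      = ∑ q ∈ Finset.univ.offDiag, T.dist q.1 q.2 := by
  unfold crossO
  simp_rw [Finset.card_filter]
  rw [Finset.sum_comm]
  refine Finset.sum_congr rfl fun q hq => ?_
  rw [Finset.mem_offDiag] at hq
  rw [← Finset.card_filter]
  exact sep_count hT hq.2.2

private lemma self_mem_crossF {T : SimpleGraph V} (hT : T.IsTree) {x y : V}
    (h : T.Adj x y) : s(x, y) ∈ crossF T s(x, y) := by
  apply Finset.mem_image.2
  refine ⟨(x, y), ?_, rfl⟩
  rw [crossO, Finset.mem_filter, Finset.mem_offDiag]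
  exact ⟨⟨Finset.mem_univ _, Finset.mem_univ _, h.ne⟩, tree_bridge hT h⟩

private lemma crossF_lower {T : SimpleGraph V} (hT : T.IsTree) {x y : V}
    (h : T.Adj x y) : Fintype.card V - 1 ≤ (crossF T s(x, y)).card := by
  set D := T.deleteEdges {s(x, y)} with hD
  have hbr : ¬D.Reachable x y := tree_bridge hT h
  have hcov : ∀ w, D.Reachable w x ∨ D.Reachable w y := fun w =>
    reach_cover (hT.isConnected.preconnected w x).some rfl
  have hcard : (Finset.univ.erase y).card = Fintype.card V - 1 := by
    rw [Finset.card_erase_of_mem (Finset.mem_univ y), Finset.card_univ]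
  rw [← hcard]
  apply Finset.card_le_card_of_injOn
    (fun w => if D.Reachable w x then s(w, y) else s(w, x))
  · intro w hw
    have hwy : w ≠ y := (Finset.mem_erase.1 hw).1
    by_cases hr : D.Reachable w x
    · simp only [if_pos hr, Finset.mem_coe]
      apply Finset.mem_image.2
      refine ⟨(w, y), ?_, rfl⟩
      rw [crossO, Finset.mem_filter, Finset.mem_offDiag]
      exact ⟨⟨Finset.mem_univ _, Finset.mem_univ _, hwy⟩,
        fun hc => hbr (hr.symm.trans hc)⟩
    · simp only [if_neg hr, Finset.mem_coe]
      apply Finset.mem_image.2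
      refine ⟨(w, x), ?_, rfl⟩
      have hwx : w ≠ x := fun hc => hr (hc ▸ SimpleGraph.Reachable.refl w)
      rw [crossO, Finset.mem_filter, Finset.mem_offDiag]
      exact ⟨⟨Finset.mem_univ _, Finset.mem_univ _, hwx⟩, hr⟩
  · intro w1 h1 w2 h2 heq
    dsimp only at heq
    rw [Finset.coe_erase, Set.mem_diff, Set.mem_singleton_iff] at h1 h2
    have hxy : x ≠ y := h.ne
    by_cases r1 : D.Reachable w1 x
    · by_cases r2 : D.Reachable w2 x
      · rw [if_pos r1, if_pos r2, Sym2.eq_iff] at heq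
        rcases heq with ⟨h', _⟩ | ⟨h', _⟩
        · exact h'
        · exact absurd h' h1.2
      · rw [if_pos r1, if_neg r2, Sym2.eq_iff] at heq
        rcases heq with ⟨_, h''⟩ | ⟨_, h''⟩
        · exact absurd h''.symm hxy
        · exact absurd h''.symm h2.2
    · by_cases r2 : D.Reachable w2 x
      · rw [if_neg r1, if_pos r2, Sym2.eq_iff] at heq
        rcases heq with ⟨_, h''⟩ | ⟨h', _⟩
        · exact absurd h'' hxy
        · exact absurd h' h1.2
      · rw [if_neg r1, if_neg r2, Sym2.eq_iff] at heq
        rcases heq with ⟨h', _⟩ | ⟨h', h''⟩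
        · exact h'
        · exact absurd (h' ▸ SimpleGraph.Reachable.refl w1) r1

private lemma cross_not_edge {T : SimpleGraph V} {e p : Sym2 V}
    (hp : p ∈ crossF T e) (hne : p ≠ e) : p ∉ T.edgeSet := by
  obtain ⟨u, v, rfl, huv, hsep⟩ := cross_spec hp
  intro hmem
  apply hsep
  apply SimpleGraph.Adj.reachable
  rw [SimpleGraph.deleteEdges_adj]
  exact ⟨T.mem_edgeSet.1 hmem, by simpa using hne⟩

end Cross

section Swap

variable [Fintype V]

private def newT (T : SimpleGraph V) (e p : Sym2 V) : SimpleGraph V :=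
  SimpleGraph.fromEdgeSet ((T.edgeSet \ {e}) ∪ {p})

private lemma swap_edgeSet {T : SimpleGraph V} {e p : Sym2 V} (hnd : ¬p.IsDiag) :
    (newT T e p).edgeSet = (T.edgeSet \ {e}) ∪ {p} := by
  rw [newT, SimpleGraph.edgeSet_fromEdgeSet]
  ext f
  simp only [Set.mem_diff, Set.mem_setOf_eq]
  constructor
  · exact fun hh => hh.1
  · intro hf
    refine ⟨hf, ?_⟩
    rcases hf with ⟨hfE, _⟩ | hfp
    · exact T.not_isDiag_of_mem_edgeSet hfE
    · rw [Set.mem_singleton_iff] at hfp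
      rw [hfp]
      exact hnd

private lemma swap_main {T : SimpleGraph V} (hT : T.IsTree) {x y : V} (hxy : T.Adj x y)
    {p : Sym2 V} (hp : p ∈ crossF T s(x, y)) (hne : p ≠ s(x, y)) :
    (newT T s(x, y) p).IsTree
      ∧ T.edgeSet ∩ (newT T s(x, y) p).edgeSet = T.edgeSet \ {s(x, y)}
      ∧ newT T s(x, y) p ≠ T := by
  obtain ⟨u, v, rfl, huv, hsep⟩ := cross_spec hp
  set e : Sym2 V := s(x, y) with he_def
  have hnd : ¬(s(u, v) : Sym2 V).IsDiag := by
    rw [Sym2.mk_isDiag_iff]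
    exact huv
  have hpE : s(u, v) ∉ T.edgeSet := cross_not_edge hp hne
  have hES := swap_edgeSet (T := T) (e := e) hnd
  set N' := newT T e s(u, v) with hN'def
  set D := T.deleteEdges {e} with hD_def
  have hDle : D ≤ N' := by
    rw [← SimpleGraph.edgeSet_subset_edgeSet, SimpleGraph.edgeSet_deleteEdges, hES]
    exact Set.subset_union_left
  have hadjp : N'.Adj u v := by
    rw [← SimpleGraph.mem_edgeSet, hES]
    exact Or.inr rfl
  have hcov : ∀ w, D.Reachable w x ∨ D.Reachable w y := fun w =>
    reach_cover (hT.isConnected.preconnected w x).some rfl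
  have hside : ∀ w, D.Reachable w u ∨ D.Reachable w v := by
    rcases hcov u with hu | hu <;> rcases hcov v with hv | hv
    · exact absurd (hu.trans hv.symm) hsep
    · intro w
      rcases hcov w with hw | hw
      · exact Or.inl (hw.trans hu.symm)
      · exact Or.inr (hw.trans hv.symm)
    · intro w
      rcases hcov w with hw | hw
      · exact Or.inr (hw.trans hv.symm)
      · exact Or.inl (hw.trans hu.symm)
    · exact absurd (hu.trans hv.symm) hsep
  have hwu : ∀ w, N'.Reachable w u := by
    intro w
    rcases hside w with hw | hw
    · exact hw.mono hDle
    · exact (hw.mono hDle).trans hadjp.symm.reachable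
  have hconn : N'.Connected := by
    have hnon : Nonempty V := hT.isConnected.nonempty
    exact ⟨fun a b => (hwu a).trans (hwu b).symm⟩
  have hgeq : N' \ SimpleGraph.fromEdgeSet {s(u, v)} = D := by
    rw [← SimpleGraph.edgeSet_inj, SimpleGraph.edgeSet_sdiff, hES,
      SimpleGraph.edgeSet_fromEdgeSet, hD_def, SimpleGraph.edgeSet_deleteEdges]
    ext f
    constructor
    · rintro ⟨h1, h2⟩
      rcases h1 with h1 | h1
      · exact h1
      · rw [Set.mem_singleton_iff] at h1
        exact absurd ⟨h1, h1 ▸ hnd⟩ h2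
    · intro hf
      refine ⟨Or.inl hf, ?_⟩
      rintro ⟨hc, _⟩
      rw [Set.mem_singleton_iff] at hc
      exact hpE (hc ▸ hf.1)
  have hbridge : N'.IsBridge s(u, v) := by
    rw [SimpleGraph.isBridge_iff]
    show ¬ (N' \ SimpleGraph.fromEdgeSet {s(u, v)}).Reachable u v
    rw [hgeq]
    exact hsep
  have hacy : N'.IsAcyclic := by
    intro w c hc
    by_cases hpc : s(u, v) ∈ c.edges
    · rw [SimpleGraph.isBridge_iff_adj_and_forall_cycle_notMem] at hbridge
      exact hbridge c hc hpc
      exact hadjp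
    · have hsub : ∀ g ∈ c.edges, g ∈ T.edgeSet := by
        intro g hg
        have hg2 := c.edges_subset_edgeSet hg
        rw [hES] at hg2
        rcases hg2 with hg2 | hg2
        · exact hg2.1
        · rw [Set.mem_singleton_iff] at hg2
          exact absurd (hg2 ▸ hg) hpc
      exact hT.2 (c.transfer T hsub) (hc.transfer hsub)
  refine ⟨⟨hconn, hacy⟩, ?_, ?_⟩
  · rw [hES]
    ext f
    constructor
    · rintro ⟨h1, h2 | h2⟩
      · exact ⟨h1, h2.2⟩
      · rw [Set.mem_singleton_iff] at h2
        exact absurd (h2 ▸ h1) hpE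
    · rintro ⟨h1, h2⟩
      exact ⟨h1, Or.inl ⟨h1, h2⟩⟩
  · intro hcon
    apply hpE
    rw [← hcon, hES]
    exact Or.inr rfl

private lemma swap_recover {E : Set (Sym2 V)} {e e' p p' : Sym2 V}
    (he : e ∈ E) (he' : e' ∈ E) (hp : p ∉ E) (hp' : p' ∉ E)
    (heq : (E \ {e}) ∪ {p} = (E \ {e'}) ∪ {p'}) : e = e' ∧ p = p' := by
  have h1 : e = e' := by
    by_contra hcon
    have hmem : e ∈ (E \ {e'}) ∪ {p'} := Or.inl ⟨he, by simpa using hcon⟩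
    rw [← heq] at hmem
    rcases hmem with h | h
    · exact h.2 rfl
    · rw [Set.mem_singleton_iff] at h
      exact hp (h ▸ he)
  subst h1
  refine ⟨rfl, ?_⟩
  have hmem : p ∈ (E \ {e}) ∪ {p'} := by rw [← heq]; exact Or.inr rfl
  rcases hmem with h | h
  · exact absurd h.1 hp
  · exact h

private lemma tree_ncard {T : SimpleGraph V} (hT : T.IsTree) :
    T.edgeSet.ncard + 1 = Fintype.card V := by
  have h := hT.card_edgeFinset
  have h2 := Set.ncard_coe_finset T.edgeFinset
  rw [SimpleGraph.coe_edgeFinset] at h2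
  omega

private lemma swap_surj {T : SimpleGraph V} (hT : T.IsTree) {T' : SimpleGraph V}
    (hT' : T'.IsTree) (hne : T' ≠ T)
    (hcap : T.edgeSet.ncard ≤ (T.edgeSet ∩ T'.edgeSet).ncard + 1) :
    ∃ x y, T.Adj x y ∧ ∃ p ∈ crossF T s(x, y), p ≠ s(x, y) ∧ T' = newT T s(x, y) p := by
  have hc1 := tree_ncard hT
  have hc2 := tree_ncard hT'
  have hEne : T.edgeSet ≠ T'.edgeSet := fun hh => hne (SimpleGraph.edgeSet_inj.1 hh).symm
  have hsplit1 := Set.ncard_inter_add_ncard_diff_eq_ncard T.edgeSet T'.edgeSet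
  have hdne : (T.edgeSet \ T'.edgeSet).Nonempty := by
    by_contra hcon
    rw [Set.not_nonempty_iff_eq_empty, Set.diff_eq_empty] at hcon
    exact hEne (Set.eq_of_subset_of_ncard_le hcon (by omega))
  have hd1 : (T.edgeSet \ T'.edgeSet).ncard = 1 := by
    have hpos := (Set.ncard_pos (s := T.edgeSet \ T'.edgeSet)).2 hdne
    omega
  obtain ⟨e, hediff⟩ := Set.ncard_eq_one.1 hd1
  have heE : e ∈ T.edgeSet ∧ e ∉ T'.edgeSet := by
    have hmem : e ∈ T.edgeSet \ T'.edgeSet := by rw [hediff]; rfl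
    exact ⟨hmem.1, hmem.2⟩
  have hsplit2 := Set.ncard_inter_add_ncard_diff_eq_ncard T'.edgeSet T.edgeSet
  have hint : (T'.edgeSet ∩ T.edgeSet).ncard = (T.edgeSet ∩ T'.edgeSet).ncard := by
    rw [Set.inter_comm]
  have hdne2 : (T'.edgeSet \ T.edgeSet).Nonempty := by
    by_contra hcon
    rw [Set.not_nonempty_iff_eq_empty, Set.diff_eq_empty] at hcon
    exact hEne (Set.eq_of_subset_of_ncard_le hcon (by omega)).symm
  have hd2 : (T'.edgeSet \ T.edgeSet).ncard = 1 := by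
    have hpos := (Set.ncard_pos (s := T'.edgeSet \ T.edgeSet)).2 hdne2
    omega
  obtain ⟨p, hpdiff⟩ := Set.ncard_eq_one.1 hd2
  have hpE : p ∈ T'.edgeSet ∧ p ∉ T.edgeSet := by
    have hmem : p ∈ T'.edgeSet \ T.edgeSet := by rw [hpdiff]; rfl
    exact ⟨hmem.1, hmem.2⟩
  have hE'eq : T'.edgeSet = (T.edgeSet \ {e}) ∪ {p} := by
    ext f
    constructor
    · intro hf
      by_cases hfp : f = p
      · exact Or.inr hfp
      · have hfE : f ∈ T.edgeSet := by
          by_contra hcon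
          have hmem : f ∈ T'.edgeSet \ T.edgeSet := ⟨hf, hcon⟩
          rw [hpdiff, Set.mem_singleton_iff] at hmem
          exact hfp hmem
        refine Or.inl ⟨hfE, fun hc => ?_⟩
        rw [Set.mem_singleton_iff] at hc
        exact heE.2 (hc ▸ hf)
    · intro hf
      rcases hf with ⟨hfE, hfe⟩ | hfp
      · by_contra hcon
        have hmem : f ∈ T.edgeSet \ T'.edgeSet := ⟨hfE, hcon⟩
        rw [hediff, Set.mem_singleton_iff] at hmem
        exact hfe (by rw [hmem]; rfl)
      · rw [Set.mem_singleton_iff] at hfp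
        rw [hfp]
        exact hpE.1
  obtain ⟨⟨x, y⟩, hxyrep⟩ := Quot.exists_rep e
  have hexy : s(x, y) = e := hxyrep
  have hadjxy : T.Adj x y := T.mem_edgeSet.1 (hexy ▸ heE.1)
  obtain ⟨⟨u, v⟩, huvrep⟩ := Quot.exists_rep p
  have hpuv : s(u, v) = p := huvrep
  have hadjuv : T'.Adj u v := T'.mem_edgeSet.1 (hpuv ▸ hpE.1)
  have hDle' : T.deleteEdges {e} ≤ T' := by
    rw [← SimpleGraph.edgeSet_subset_edgeSet, SimpleGraph.edgeSet_deleteEdges, hE'eq]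
    exact Set.subset_union_left
  have hsep : ¬(T.deleteEdges {e}).Reachable u v := by
    intro hr
    obtain ⟨q0⟩ := hr
    have hqsub : ∀ g ∈ q0.bypass.edges, g ∈ T'.edgeSet := fun g hg =>
      SimpleGraph.edgeSet_subset_edgeSet.2 hDle' (q0.bypass.edges_subset_edgeSet hg)
    have hq'path : (q0.bypass.transfer T' hqsub).IsPath :=
      (SimpleGraph.Walk.bypass_isPath q0).transfer hqsub
    have huniq := SimpleGraph.IsAcyclic.path_unique hT'.2
      ⟨q0.bypass.transfer T' hqsub, hq'path⟩ (SimpleGraph.Path.singleton hadjuv)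
    have hval : q0.bypass.transfer T' hqsub
        = SimpleGraph.Walk.cons hadjuv SimpleGraph.Walk.nil := Subtype.ext_iff.mp huniq
    have hpmem : p ∈ (q0.bypass.transfer T' hqsub).edges := by
      rw [hval, ← hpuv]
      simp
    rw [SimpleGraph.Walk.edges_transfer] at hpmem
    have hme := q0.bypass.edges_subset_edgeSet hpmem
    rw [SimpleGraph.edgeSet_deleteEdges] at hme
    exact hpE.2 hme.1
  have hpne : p ≠ e := fun hc => hpE.2 (hc ▸ heE.1)
  refine ⟨x, y, hadjxy, p, ?_, ?_, ?_⟩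
  · rw [hexy, ← hpuv]
    refine Finset.mem_image.2 ⟨(u, v), ?_, rfl⟩
    rw [crossO, Finset.mem_filter, Finset.mem_offDiag]
    exact ⟨⟨Finset.mem_univ _, Finset.mem_univ _, hadjuv.ne⟩, hsep⟩
  · rw [hexy]
    exact hpne
  · have hnd : ¬p.IsDiag := by
      rw [← hpuv, Sym2.mk_isDiag_iff]
      exact hadjuv.ne
    rw [← SimpleGraph.edgeSet_inj, swap_edgeSet hnd, hexy, hE'eq]

end Swap

/-- For every tree `T` on `n` vertices, the size of its radius-1 ball in
tree distance satisfies
`(n-1)(n-2) + 1 ≤ V_T(n,1) ≤ (n-1)(n-2)(n+3)/6 + 1`: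
the star minimizes and the line maximizes the radius-1 ball size. -/
theorem ball_radius_one_bounds (n : ℕ) (T : SimpleGraph (Fin n)) (hT : T.IsTree) :
    (n - 1) * (n - 2) + 1
      ≤ {T' : SimpleGraph (Fin n) | T'.IsTree ∧
          (n - 1) - (T.edgeSet ∩ T'.edgeSet).ncard ≤ 1}.ncard ∧
    {T' : SimpleGraph (Fin n) | T'.IsTree ∧
        (n - 1) - (T.edgeSet ∩ T'.edgeSet).ncard ≤ 1}.ncard
      ≤ (n - 1) * (n - 2) * (n + 3) / 6 + 1 := by
  set S := {T' : SimpleGraph (Fin n) | T'.IsTree ∧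
    (n - 1) - (T.edgeSet ∩ T'.edgeSet).ncard ≤ 1} with hS
  have hn : T.edgeSet.ncard + 1 = n := by
    have h := tree_ncard hT
    rwa [Fintype.card_fin] at h
  set P : Finset (Sym2 (Fin n) × Sym2 (Fin n)) :=
    T.edgeFinset.biUnion (fun e => ((crossF T e).erase e).image (fun p => (e, p))) with hP
  have hPunpack : ∀ q ∈ P, q.1 ∈ T.edgeFinset ∧ q.2 ∈ crossF T q.1 ∧ q.2 ≠ q.1 := by
    intro q hq
    obtain ⟨e, he, hq2⟩ := Finset.mem_biUnion.1 hq
    obtain ⟨p, hp2, hqe⟩ := Finset.mem_image.1 hq2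
    obtain ⟨hpne, hpc⟩ := Finset.mem_erase.1 hp2
    rw [← hqe]
    exact ⟨he, hpc, hpne⟩
  have hPmain : ∀ q ∈ P, (newT T q.1 q.2).IsTree
      ∧ T.edgeSet ∩ (newT T q.1 q.2).edgeSet = T.edgeSet \ {q.1}
      ∧ newT T q.1 q.2 ≠ T := by
    intro q hq
    obtain ⟨he, hpc, hpne⟩ := hPunpack q hq
    obtain ⟨⟨x, y⟩, hrep⟩ := Quot.exists_rep q.1
    have hexy : s(x, y) = q.1 := hrep
    have hadjxy : T.Adj x y := T.mem_edgeSet.1 (hexy ▸ SimpleGraph.mem_edgeFinset.1 he)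
    have hmain := swap_main hT hadjxy (p := q.2) (by rw [hexy]; exact hpc)
      (by rw [hexy]; exact hpne)
    rw [hexy] at hmain
    exact hmain
  have hSswap : S = insert T ((fun q : Sym2 (Fin n) × Sym2 (Fin n) => newT T q.1 q.2) '' ↑P) := by
    ext T'
    simp only [hS, Set.mem_insert_iff, Set.mem_setOf_eq, Set.mem_image, Finset.mem_coe]
    constructor
    · rintro ⟨hT', hd⟩
      by_cases hTeq : T' = T
      · exact Or.inl hTeq
      · right
        have hcap : T.edgeSet.ncard ≤ (T.edgeSet ∩ T'.edgeSet).ncard + 1 := by omega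
        obtain ⟨x, y, hadjxy, p, hpc, hpne, hTeq'⟩ := swap_surj hT hT' hTeq hcap
        refine ⟨(s(x, y), p), ?_, hTeq'.symm⟩
        refine Finset.mem_biUnion.2 ⟨s(x, y), ?_, ?_⟩
        · exact SimpleGraph.mem_edgeFinset.2 (T.mem_edgeSet.2 hadjxy)
        · exact Finset.mem_image.2 ⟨p, Finset.mem_erase.2 ⟨hpne, hpc⟩, rfl⟩
    · intro h
      rcases h with rfl | ⟨q, hq, rfl⟩
      · refine ⟨hT, ?_⟩
        rw [Set.inter_self]
        omega
      · obtain ⟨hmT, hmI, _⟩ := hPmain q hq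
        refine ⟨hmT, ?_⟩
        rw [hmI, Set.ncard_diff_singleton_of_mem
          (SimpleGraph.mem_edgeFinset.1 (hPunpack q hq).1)]
        omega
  have hinj : Set.InjOn (fun q : Sym2 (Fin n) × Sym2 (Fin n) => newT T q.1 q.2) ↑P := by
    intro q1 h1 q2 h2 heq
    rw [Finset.mem_coe] at h1 h2
    obtain ⟨he1, hc1, hn1⟩ := hPunpack q1 h1
    obtain ⟨he2, hc2, hn2⟩ := hPunpack q2 h2
    have hd1 : ¬q1.2.IsDiag := by
      obtain ⟨u, v, hq, huv, _⟩ := cross_spec hc1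
      rw [hq, Sym2.mk_isDiag_iff]
      exact huv
    have hd2 : ¬q2.2.IsDiag := by
      obtain ⟨u, v, hq, huv, _⟩ := cross_spec hc2
      rw [hq, Sym2.mk_isDiag_iff]
      exact huv
    have hE1 : (newT T q1.1 q1.2).edgeSet = (T.edgeSet \ {q1.1}) ∪ {q1.2} :=
      swap_edgeSet hd1
    have hE2 : (newT T q2.1 q2.2).edgeSet = (T.edgeSet \ {q2.1}) ∪ {q2.2} :=
      swap_edgeSet hd2
    have hsets : (T.edgeSet \ {q1.1}) ∪ {q1.2} = (T.edgeSet \ {q2.1}) ∪ {q2.2} := by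
      rw [← hE1, ← hE2]
      dsimp only at heq
      rw [heq]
    have hrec := swap_recover (SimpleGraph.mem_edgeFinset.1 he1)
      (SimpleGraph.mem_edgeFinset.1 he2) (cross_not_edge hc1 hn1)
      (cross_not_edge hc2 hn2) hsets
    exact Prod.ext hrec.1 hrec.2
  have hTnot : T ∉ ((fun q : Sym2 (Fin n) × Sym2 (Fin n) => newT T q.1 q.2) '' ↑P) := by
    rintro ⟨q, hq, hTeq⟩
    rw [Finset.mem_coe] at hq
    exact (hPmain q hq).2.2 hTeq
  have hcount : S.ncard = P.card + 1 := by
    rw [hSswap, Set.ncard_insert_of_notMem hTnot ((P.finite_toSet).image _),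
      Set.ncard_image_of_injOn hinj, Set.ncard_coe_finset]
  have hPcard : P.card = ∑ e ∈ T.edgeFinset, ((crossF T e).erase e).card := by
    rw [hP]
    rw [Finset.card_biUnion]
    · refine Finset.sum_congr rfl fun e _ => ?_
      apply Finset.card_image_of_injective
      intro a b hab
      exact (Prod.ext_iff.1 hab).2
    · intro e he f hf hne'
      rw [Function.onFun_apply, Finset.disjoint_left]
      intro a ha hb
      obtain ⟨p, _, hpa⟩ := Finset.mem_image.1 ha
      obtain ⟨p', _, hpb⟩ := Finset.mem_image.1 hb
      rw [← hpa] at hpb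
      exact hne' ((Prod.ext_iff.1 hpb).1).symm
  have hedge_facts : ∀ e ∈ T.edgeFinset,
      ((crossF T e).erase e).card + 1 = (crossF T e).card
        ∧ n - 1 ≤ (crossF T e).card := by
    intro e he
    obtain ⟨⟨x, y⟩, hrep⟩ := Quot.exists_rep e
    have hexy : s(x, y) = e := hrep
    have hadjxy : T.Adj x y := T.mem_edgeSet.1 (hexy ▸ SimpleGraph.mem_edgeFinset.1 he)
    have hselfm : e ∈ crossF T e := by
      rw [← hexy]
      exact self_mem_crossF hT hadjxy
    have hpos : 1 ≤ (crossF T e).card := Finset.card_pos.2 ⟨e, hselfm⟩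
    have hlowe := crossF_lower hT hadjxy
    rw [Fintype.card_fin, hexy] at hlowe
    refine ⟨?_, hlowe⟩
    rw [Finset.card_erase_of_mem hselfm]
    omega
  have hEc : T.edgeFinset.card = n - 1 := by
    have h := hT.card_edgeFinset
    rw [Fintype.card_fin] at h
    omega
  have hlow : (n - 1) * (n - 2) ≤ P.card := by
    rw [hPcard]
    calc (n - 1) * (n - 2) = ∑ _e ∈ T.edgeFinset, (n - 2) := by
          rw [Finset.sum_const, hEc, smul_eq_mul]
      _ ≤ ∑ e ∈ T.edgeFinset, ((crossF T e).erase e).card := by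
          refine Finset.sum_le_sum fun e he => ?_
          obtain ⟨h1, h2⟩ := hedge_facts e he
          omega
  have hsum_er : ∑ e ∈ T.edgeFinset, ((crossF T e).erase e).card + (n - 1)
      = ∑ e ∈ T.edgeFinset, (crossF T e).card := by
    rw [← hEc]
    calc ∑ e ∈ T.edgeFinset, ((crossF T e).erase e).card + T.edgeFinset.card
        = ∑ e ∈ T.edgeFinset, (((crossF T e).erase e).card + 1) := by
          rw [Finset.sum_add_distrib, Finset.sum_const, smul_eq_mul, mul_one]
      _ = ∑ e ∈ T.edgeFinset, (crossF T e).card :=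
          Finset.sum_congr rfl fun e he => (hedge_facts e he).1
  have hW := key_wiener n T Finset.univ (by simp) (fun a b _ => Finset.mem_univ a)
    (fun u _ v _ => hT.isConnected.preconnected u v)
    (by rw [Finset.card_univ, Fintype.card_fin]; exact hn)
  rw [Finset.card_univ, Fintype.card_fin, ← cross_sum hT] at hW
  have hsum_cross : 2 * ∑ e ∈ T.edgeFinset, (crossF T e).card
      = ∑ e ∈ T.edgeFinset, (crossO T e).card := by
    rw [Finset.mul_sum]
    exact Finset.sum_congr rfl fun e _ => (crossO_card e).symm
  have hup6 : 6 * ∑ e ∈ T.edgeFinset, (crossF T e).card ≤ (n - 1) * n * (n + 1) := by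
    linarith [hW, hsum_cross]
  have hid : (n - 1) * n * (n + 1) = (n - 1) * (n - 2) * (n + 3) + 6 * (n - 1) := by
    rcases n with _ | _ | m
    · norm_num
    · norm_num
    · show (m + 1) * (m + 2) * (m + 3) = (m + 1) * m * (m + 5) + 6 * (m + 1)
      ring
  have hPup : P.card * 6 ≤ (n - 1) * (n - 2) * (n + 3) := by
    rw [hPcard]
    linarith [hup6, hsum_er, hid]
  have h6 : P.card ≤ (n - 1) * (n - 2) * (n + 3) / 6 :=
    (Nat.le_div_iff_mul_le (by norm_num)).2 hPup
  constructor
  · rw [hcount]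
    omega
  · rw [hcount]
    omega
end

section
/- For every integer n ≥ 1, ∑_{i=1}^{n-1} C(n,i) · i^i · (n-i)^{n-i} = n! · ∑_{k=0}^{n-2} n^k / k!. -/
open Finset

noncomputable def S (n m : ℕ) : ℝ := ∑ k ∈ range (n+1), (-1:ℝ)^(n-k) * (n.choose k) * (k:ℝ)^m

lemma alt_sum (n : ℕ) (hn : n ≠ 0) : ∑ k ∈ range (n+1), (-1:ℝ)^(n-k) * (n.choose k) = 0 := by
  have h : ∀ k ∈ range (n+1), (-1:ℝ)^(n-k) * (n.choose k) = (-1)^n * ((-1)^k * (n.choose k)) := by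
    intro k hk
    rw [mem_range] at hk
    have hkn : k ≤ n := Nat.lt_succ_iff.mp hk
    have : (-1:ℝ)^(n-k) * (-1)^k = (-1)^n := by
      rw [← pow_add, Nat.sub_add_cancel hkn]
    rw [← this]
    have h2 : ((-1:ℝ)^k)^2 = 1 := by
      rw [← pow_mul, mul_comm, pow_mul]; simp
    ring_nf
    rw [mul_comm k 2, pow_mul]
    simp
  rw [Finset.sum_congr rfl h, ← Finset.mul_sum]
  have := Int.alternating_sum_range_choose_of_ne hn
  have hr : ∑ k ∈ range (n+1), ((-1:ℝ)^k * (n.choose k)) = 0 := by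
    calc ∑ k ∈ range (n+1), ((-1:ℝ)^k * (n.choose k))
        = ((∑ k ∈ range (n+1), ((-1:ℤ)^k * (n.choose k)) : ℤ) : ℝ) := by push_cast; ring
      _ = 0 := by rw [this]; simp
  rw [hr, mul_zero]

lemma S_step (n m : ℕ) (hm : 1 ≤ m) :
    S (n+1) m = (n+1) * ∑ t ∈ range m, (Nat.choose (m-1) t : ℝ) * S n t := by
  unfold S
  rw [Finset.sum_range_succ']
  have h0 : (-1:ℝ)^(n+1-0) * ((n+1).choose 0) * ((0:ℕ):ℝ)^m = 0 := by
    simp [zero_pow (by omega : m ≠ 0)]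
  rw [h0, add_zero]
  have key : ∀ j ∈ range (n+1),
      (-1:ℝ)^(n+1-(j+1)) * ((n+1).choose (j+1)) * ((j+1:ℕ):ℝ)^m
      = (n+1) * ∑ t ∈ range m, (Nat.choose (m-1) t : ℝ) * ((-1:ℝ)^(n-j) * (n.choose j) * (j:ℝ)^t) := by
    intro j hj
    have hsub : n + 1 - (j+1) = n - j := by omega
    have hcn : (n+1).choose (j+1) * (j+1) = (n+1) * n.choose j := (Nat.add_one_mul_choose_eq n j).symm
    have hc : ((n+1).choose (j+1) : ℝ) * ((j:ℝ)+1) = ((n:ℝ)+1) * (n.choose j) := by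
      exact_mod_cast congrArg (Nat.cast : ℕ → ℝ) hcn
    have hm1 : m - 1 + 1 = m := by omega
    have hpow : ((j:ℝ)+1)^m = ((j:ℝ)+1)^(m-1) * ((j:ℝ)+1) := by
      rw [← pow_succ, hm1]
    have hbin : ((j:ℝ)+1)^(m-1) = ∑ t ∈ range m, (j:ℝ)^t * (Nat.choose (m-1) t : ℝ) := by
      have h := add_pow (j:ℝ) 1 (m-1)
      simp only [one_pow, mul_one] at h
      rw [h, hm1]
    rw [hsub]
    push_cast
    rw [hpow, hbin, Finset.sum_mul, Finset.mul_sum, Finset.mul_sum]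
    apply Finset.sum_congr rfl
    intro t _
    linear_combination ((-1:ℝ)^(n-j) * (j:ℝ)^t * (((m-1).choose t : ℕ):ℝ)) * hc
  rw [Finset.sum_congr rfl key, ← Finset.mul_sum]
  congr 1
  rw [Finset.sum_comm]
  exact Finset.sum_congr rfl fun t _ => (Finset.mul_sum _ _ _).symm

lemma findiff : ∀ n : ℕ, (∀ m, m < n → S n m = 0) ∧ S n n = (n.factorial : ℝ) := by
  intro n
  induction n with
  | zero =>
    constructor
    · intro m hm; omega
    · simp [S]
  | succ n ih =>
    constructor
    · intro m hm
      rcases Nat.eq_zero_or_pos m with h0 | h1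
      · subst h0
        have := alt_sum (n+1) (Nat.succ_ne_zero n)
        unfold S
        simpa using this
      · rw [S_step n m h1]
        have : ∀ t ∈ range m, (Nat.choose (m-1) t : ℝ) * S n t = 0 := by
          intro t ht
          rw [mem_range] at ht
          rw [ih.1 t (by omega), mul_zero]
        rw [Finset.sum_congr rfl this, Finset.sum_const_zero, mul_zero]
    · rw [S_step n (n+1) (by omega)]
      have hsimp : n + 1 - 1 = n := rfl
      rw [hsimp, Finset.sum_range_succ]
      have : ∀ t ∈ range n, (Nat.choose n t : ℝ) * S n t = 0 := by
        intro t ht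
        rw [mem_range] at ht
        rw [ih.1 t ht, mul_zero]
      rw [Finset.sum_congr rfl this, Finset.sum_const_zero, zero_add, Nat.choose_self, ih.2]
      push_cast [Nat.factorial_succ]
      ring

open Polynomial in
noncomputable def Pp (n : ℕ) : ℝ[X] :=
  ∑ k ∈ range (n+1), Polynomial.C ((n.choose k : ℝ) * (k:ℝ)^k) * (X - Polynomial.C (k:ℝ))^(n-k)

open Polynomial in
noncomputable def Qp (n : ℕ) : ℝ[X] :=
  ∑ k ∈ range (n+1), Polynomial.C ((n.descFactorial k : ℝ)) * X^(n-k)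

open Polynomial in
lemma derivP (n : ℕ) : derivative (Pp (n+1)) = Polynomial.C ((n:ℝ)+1) * Pp n := by
  unfold Pp
  rw [derivative_sum, Finset.sum_range_succ, Finset.mul_sum]
  have hlast : derivative (Polynomial.C (((n+1).choose (n+1) : ℝ) * ((n+1:ℕ):ℝ)^(n+1)) *
      (X - Polynomial.C ((n+1:ℕ):ℝ))^(n+1-(n+1))) = 0 := by
    rw [Nat.sub_self, pow_zero, mul_one, derivative_C]
  rw [hlast, add_zero]
  apply Finset.sum_congr rfl
  intro k hk
  rw [mem_range] at hk
  have hkn : k ≤ n := by omega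
  rw [derivative_C_mul, derivative_pow, derivative_sub, derivative_X, derivative_C, sub_zero,
    mul_one, show n+1-k-1 = n-k from by omega]
  have hco : (((n+1).choose k : ℝ) * ((n+1-k : ℕ):ℝ)) = ((n:ℝ)+1) * (n.choose k) := by
    have h := Nat.choose_mul_succ_eq n k
    have h2 : ((n.choose k * (n+1) : ℕ) : ℝ) = (((n+1).choose k * (n+1-k) : ℕ) : ℝ) := by
      exact_mod_cast congrArg (Nat.cast : ℕ → ℝ) h
    push_cast [Nat.cast_sub (by omega : k ≤ n+1)] at h2 ⊢
    linarith
  have hC : Polynomial.C (((n+1).choose k : ℝ) * (k:ℝ)^k) * Polynomial.C (((n+1-k:ℕ)):ℝ)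
      = Polynomial.C ((n:ℝ)+1) * Polynomial.C ((n.choose k : ℝ) * (k:ℝ)^k) := by
    rw [← C_mul, ← C_mul]
    congr 1
    linear_combination ((k:ℝ)^k) * hco
  calc Polynomial.C (((n+1).choose k : ℝ) * (k:ℝ)^k) *
        (Polynomial.C (((n+1-k:ℕ)):ℝ) * (X - Polynomial.C (k:ℝ))^(n-k))
      = (Polynomial.C (((n+1).choose k : ℝ) * (k:ℝ)^k) * Polynomial.C (((n+1-k:ℕ)):ℝ)) *
        (X - Polynomial.C (k:ℝ))^(n-k) := by ring
    _ = Polynomial.C ((n:ℝ)+1) *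
        (Polynomial.C ((n.choose k : ℝ) * (k:ℝ)^k) * (X - Polynomial.C (k:ℝ))^(n-k)) := by
        rw [hC]; ring

open Polynomial in
lemma derivQ (n : ℕ) : derivative (Qp (n+1)) = Polynomial.C ((n:ℝ)+1) * Qp n := by
  unfold Qp
  rw [derivative_sum, Finset.sum_range_succ, Finset.mul_sum]
  have hlast : derivative (Polynomial.C (((n+1).descFactorial (n+1) : ℝ)) * X^(n+1-(n+1))) = 0 := by
    simp
  rw [hlast, add_zero]
  apply Finset.sum_congr rfl
  intro k hk
  rw [mem_range] at hk
  have hkn : k ≤ n := by omega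
  rw [derivative_C_mul, derivative_X_pow, show n+1-k-1 = n-k from by omega]
  have hco : (((n+1).descFactorial k : ℝ) * ((n+1-k : ℕ):ℝ)) = ((n:ℝ)+1) * (n.descFactorial k) := by
    have h1 : (n+1).descFactorial (k+1) = (n+1-k) * (n+1).descFactorial k := Nat.descFactorial_succ (n+1) k
    have h2 : (n+1).descFactorial (k+1) = (n+1) * n.descFactorial k := Nat.succ_descFactorial_succ n k
    have h3 : ((n+1-k) * (n+1).descFactorial k : ℕ) = ((n+1) * n.descFactorial k : ℕ) := by rw [← h1, h2]
    have h4 := congrArg (Nat.cast : ℕ → ℝ) h3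
    push_cast at h4 ⊢
    linarith
  calc Polynomial.C (((n+1).descFactorial k : ℝ)) * (Polynomial.C (((n+1-k:ℕ)):ℝ) * X^(n-k))
      = Polynomial.C (((n+1).descFactorial k : ℝ) * ((n+1-k:ℕ):ℝ)) * X^(n-k) := by
        rw [C_mul]; ring
    _ = Polynomial.C ((n:ℝ)+1) * (Polynomial.C ((n.descFactorial k : ℝ)) * X^(n-k)) := by
        rw [hco, C_mul]; ring

open Polynomial in
lemma evalP (n : ℕ) : (Pp n).eval 0 = (n.factorial : ℝ) := by
  unfold Pp
  rw [eval_finset_sum]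
  have : ∀ k ∈ range (n+1),
      eval 0 (Polynomial.C ((n.choose k : ℝ) * (k:ℝ)^k) * (X - Polynomial.C (k:ℝ))^(n-k))
      = (-1:ℝ)^(n-k) * (n.choose k) * (k:ℝ)^n := by
    intro k hk
    rw [mem_range] at hk
    have hkn : k ≤ n := by omega
    rw [eval_mul, eval_pow, eval_sub, eval_X, eval_C, eval_C, zero_sub, neg_pow]
    have : (k:ℝ)^k * (k:ℝ)^(n-k) = (k:ℝ)^n := by
      rw [← pow_add, Nat.add_sub_cancel' hkn]
    linear_combination ((-1:ℝ)^(n-k) * ((n.choose k : ℕ):ℝ)) * this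
  rw [Finset.sum_congr rfl this]
  exact (findiff n).2

open Polynomial in
lemma evalQ (n : ℕ) : (Qp n).eval 0 = (n.factorial : ℝ) := by
  unfold Qp
  rw [eval_finset_sum]
  rw [Finset.sum_eq_single n]
  · simp [Nat.descFactorial_self]
  · intro k hk hne
    rw [mem_range] at hk
    have : n - k ≠ 0 := by omega
    simp [zero_pow this]
  · intro h
    exact absurd (mem_range.mpr (by omega)) h

open Polynomial in
lemma poly_eq : ∀ n, Pp n = Qp n := by
  intro n
  induction n with
  | zero => unfold Pp Qp; simp
  | succ n ih =>
    have hd : derivative (Pp (n+1) - Qp (n+1)) = 0 := by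
      rw [derivative_sub, derivP, derivQ, ih, sub_self]
    have hC := Polynomial.eq_C_of_derivative_eq_zero hd
    have h0 : (Pp (n+1) - Qp (n+1)).coeff 0 = 0 := by
      rw [Polynomial.coeff_zero_eq_eval_zero, eval_sub, evalP, evalQ, sub_self]
    rw [h0, map_zero] at hC
    exact sub_eq_zero.mp hC

lemma full_sum (n : ℕ) :
    ∑ k ∈ range (n+1), (n.choose k : ℝ) * (k:ℝ)^k * ((n-k:ℕ):ℝ)^(n-k)
      = ∑ k ∈ range (n+1), (n.descFactorial k : ℝ) * (n:ℝ)^(n-k) := by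
  have h := congrArg (Polynomial.eval (n:ℝ)) (poly_eq n)
  unfold Pp Qp at h
  rw [Polynomial.eval_finset_sum, Polynomial.eval_finset_sum] at h
  simp only [Polynomial.eval_mul, Polynomial.eval_pow, Polynomial.eval_sub, Polynomial.eval_X,
    Polynomial.eval_C] at h
  rw [← h]
  apply Finset.sum_congr rfl
  intro k hk
  rw [mem_range] at hk
  rw [Nat.cast_sub (by omega : k ≤ n)]

lemma rhs_trans (n : ℕ) :
    ∑ k ∈ range (n+1), (n.descFactorial k : ℝ) * (n:ℝ)^(n-k)
      = (n.factorial : ℝ) * ∑ j ∈ range (n+1), (n:ℝ)^j / (j.factorial : ℝ) := by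
  rw [← Finset.sum_range_reflect, Finset.mul_sum]
  apply Finset.sum_congr rfl
  intro j hj
  rw [mem_range] at hj
  have hjn : j ≤ n := by omega
  have h1 : n + 1 - 1 - j = n - j := by omega
  have h2 : n - (n - j) = j := by omega
  rw [h1, h2]
  have hfac : (j.factorial : ℕ) * n.descFactorial (n - j) = n.factorial := by
    have := Nat.factorial_mul_descFactorial (show n - j ≤ n by omega)
    rwa [h2] at this
  have hfr : (j.factorial : ℝ) * (n.descFactorial (n-j) : ℝ) = (n.factorial : ℝ) := by
    exact_mod_cast congrArg (Nat.cast : ℕ → ℝ) hfac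
  have hjne : (j.factorial : ℝ) ≠ 0 := by positivity
  field_simp
  linear_combination ((n:ℝ)^j) * hfr

/-- Abel-type identity: for every `n ≥ 1`,
`∑_{i=1}^{n-1} C(n,i) iⁱ (n-i)^(n-i) = n! ∑_{k=0}^{n-2} nᵏ/k!`. -/
theorem abel_type_identity (n : ℕ) (hn : 1 ≤ n) :
    ∑ i ∈ Finset.Icc 1 (n - 1),
        (Nat.choose n i : ℝ) * (i : ℝ) ^ i * ((n - i : ℕ) : ℝ) ^ (n - i)
      = (Nat.factorial n : ℝ) *
        ∑ k ∈ Finset.range (n - 1), (n : ℝ) ^ k / (Nat.factorial k : ℝ) := by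
  obtain ⟨m, rfl⟩ : ∃ m, n = m + 1 := ⟨n - 1, by omega⟩
  set N := m + 1 with hN
  have key : ∑ k ∈ range (N+1), (N.choose k : ℝ) * (k:ℝ)^k * ((N-k:ℕ):ℝ)^(N-k)
      = (N.factorial : ℝ) * ∑ j ∈ range (N+1), (N:ℝ)^j / (j.factorial : ℝ) :=
    (full_sum N).trans (rhs_trans N)
  set f : ℕ → ℝ := fun i => (N.choose i : ℝ) * (i:ℝ)^i * ((N-i:ℕ):ℝ)^(N-i) with hf
  have hsplit : ∑ k ∈ range (N+1), f k = f 0 + ∑ i ∈ Finset.Icc 1 m, f i + f N := by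
    rw [Finset.sum_range_succ, Finset.range_eq_Ico,
      Finset.sum_eq_sum_Ico_succ_bot (by omega : 0 < N), ← Finset.Ico_add_one_right_eq_Icc]
  have hf0 : f 0 = (N:ℝ)^N := by simp [hf]
  have hfN : f N = (N:ℝ)^N := by simp [hf]
  have hrsplit : ∑ j ∈ range (N+1), (N:ℝ)^j / (j.factorial : ℝ)
      = ∑ j ∈ range m, (N:ℝ)^j / (j.factorial : ℝ)
        + (N:ℝ)^m / (m.factorial : ℝ) + (N:ℝ)^N / (N.factorial : ℝ) := by
    rw [show N + 1 = m + 2 from rfl, Finset.sum_range_succ, Finset.sum_range_succ]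
  have hfacN : (N.factorial : ℝ) = (N:ℝ) * (m.factorial : ℝ) := by
    rw [hN]; push_cast [Nat.factorial_succ]; ring
  have hmne : (m.factorial : ℝ) ≠ 0 := by positivity
  have hNne : (N.factorial : ℝ) ≠ 0 := by positivity
  have ht1 : (N.factorial : ℝ) * ((N:ℝ)^m / (m.factorial : ℝ)) = (N:ℝ)^N := by
    rw [hfacN]
    field_simp
    rw [hN]
    ring
  have ht2 : (N.factorial : ℝ) * ((N:ℝ)^N / (N.factorial : ℝ)) = (N:ℝ)^N := by
    field_simp
  rw [hsplit, hrsplit, mul_add, mul_add, ht1, ht2] at key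
  have hgoal : Finset.Icc 1 (N - 1) = Finset.Icc 1 m := by rw [hN]; simp
  rw [hgoal, show N - 1 = m from rfl]
  linarith [key]
end
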